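/- arXiv:1403.6386 — 5 statements merged into one kernel-verified Lean document; each statement's English description precedes it below -/
import Mathlib

section
/- For any graph G on n vertices and any integer k, if k ≥ χ_g(G)+1 (one more than the grundy number of G), then G is k-mixing and the diameter of the k-recoloring graph R_k(G) is at most 4·χ(G)·n. -/
open SimpleGraph

/-- A proper `k`-coloring of a graph. -/
def Proper {V : Type} (G : SimpleGraph V) {k : ℕ} (c : V → Fin k) : Prop :=
  ∀ ⦃x y⦄, G.Adj x y → c x ≠ c y

/-- The `k`-recoloring graph of `G`: vertices are the proper `k`-colorings of `G`,
two colorings being adjacent when they differ on exactly one vertex. -/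
def recolorGraph {V : Type} (G : SimpleGraph V) (k : ℕ) :
    SimpleGraph {c : V → Fin k // Proper G c} where
  Adj c d := ∃! v, c.1 v ≠ d.1 v
  symm := by
    constructor
    rintro c d ⟨v, hv, hu⟩
    exact ⟨v, hv.symm, fun w hw => hu w hw.symm⟩
  loopless := by
    constructor
    rintro c ⟨v, hv, -⟩
    exact hv rfl

/-- `c` is a greedy (grundy) coloring of `G` relative to some vertex order:
equivalently, it is proper and every vertex sees every smaller color in its
neighborhood. -/
def IsGrundy {V : Type} (G : SimpleGraph V) (c : V → ℕ) : Prop :=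
  (∀ ⦃x y⦄, G.Adj x y → c x ≠ c y) ∧ ∀ v, ∀ j < c v, ∃ u, G.Adj v u ∧ c u = j

/-- The grundy number of `G`: the largest number of colors of a greedy coloring. -/
noncomputable def grundyNum {V : Type} [Fintype V] (G : SimpleGraph V) : ℕ :=
  sSup {ℓ | ∃ c : V → ℕ, IsGrundy G c ∧ (Finset.univ.image c).card = ℓ}

/-- A tree decomposition of the graph `G`, with nodes indexed by `ι`. -/
structure TreeDecomp {V : Type} (G : SimpleGraph V) (ι : Type) where
  T : SimpleGraph ι
  isTree : T.IsTree
  bag : ι → Finset V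
  mem_bag : ∀ x : V, ∃ u, x ∈ bag u
  edge_bag : ∀ ⦃x y⦄, G.Adj x y → ∃ u, x ∈ bag u ∧ y ∈ bag u
  support_connected : ∀ x : V, (T.induce {u | x ∈ bag u}).Connected

/-- The treewidth of a finite graph: the least `w` such that some tree decomposition
has all bags of size at most `w + 1`. -/
noncomputable def treewidth {V : Type} [Fintype V] (G : SimpleGraph V) : ℕ :=
  sInf {w | ∃ (m : ℕ) (td : TreeDecomp G (Fin m)), ∀ u, (td.bag u).card ≤ w + 1}

/-- An `ℓ`-complete tree decomposition: every bag has size `ℓ+1` and adjacent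
bags intersect on `ℓ` vertices. -/
def TreeDecomp.IsComplete {V ι : Type} [DecidableEq V] {G : SimpleGraph V}
    (td : TreeDecomp G ι) (ℓ : ℕ) : Prop :=
  (∀ u, (td.bag u).card = ℓ + 1) ∧
  ∀ ⦃u v⦄, td.T.Adj u v → (td.bag u ∩ td.bag v).card = ℓ

/-- `x` and `y` are `T`-parents: for some adjacent nodes `u, v`,
`x = B_u ∖ B_v` and `y = B_v ∖ B_u`. -/
def TreeDecomp.Parent {V ι : Type} [DecidableEq V] {G : SimpleGraph V}
    (td : TreeDecomp G ι) (x y : V) : Prop :=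
  ∃ u v, td.T.Adj u v ∧ td.bag u \ td.bag v = {x} ∧ td.bag v \ td.bag u = {y}

/-- A coloring is `X`-coherent (relative to a tree decomposition) if parents in `X`
get the same color and every vertex of `X` is the unique vertex of its color in
every bag containing it. -/
def TreeDecomp.Coherent {V ι : Type} [DecidableEq V] {G : SimpleGraph V}
    (td : TreeDecomp G ι) (X : Set V) {k : ℕ} (c : V → Fin k) : Prop :=
  (∀ ⦃x y⦄, x ∈ X → y ∈ X → td.Parent x y → c x = c y) ∧
  ∀ u, ∀ x ∈ X, x ∈ td.bag u → ∀ y ∈ td.bag u, c y = c x → y = x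

/-- The subtree rooted at `v` when `T` is rooted at `u`: the nodes all of whose
walks to the root `u` pass through `v`. -/
def subtreeAt {ι : Type} (T : SimpleGraph ι) (u v : ι) : Set ι :=
  {p | ∀ w : T.Walk p u, v ∈ w.support}

/-- `G` contains an induced path on four vertices. -/
def HasInducedP4 {V : Type} (G : SimpleGraph V) : Prop :=
  ∃ a b c d : V, a ≠ b ∧ a ≠ c ∧ a ≠ d ∧ b ≠ c ∧ b ≠ d ∧ c ≠ d ∧
    G.Adj a b ∧ G.Adj b c ∧ G.Adj c d ∧ ¬G.Adj a c ∧ ¬G.Adj a d ∧ ¬G.Adj b d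

/-- `G` contains an induced path on five vertices. -/
def HasInducedP5 {V : Type} (G : SimpleGraph V) : Prop :=
  ∃ a b c d e : V, a ≠ b ∧ a ≠ c ∧ a ≠ d ∧ a ≠ e ∧ b ≠ c ∧ b ≠ d ∧ b ≠ e ∧
    c ≠ d ∧ c ≠ e ∧ d ≠ e ∧
    G.Adj a b ∧ G.Adj b c ∧ G.Adj c d ∧ G.Adj d e ∧
    ¬G.Adj a c ∧ ¬G.Adj a d ∧ ¬G.Adj a e ∧ ¬G.Adj b d ∧ ¬G.Adj b e ∧ ¬G.Adj c e

/-- A walk is an induced path if it is a path and the only adjacencies among its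
vertices are its own edges. -/
def IsInducedPathW {V : Type} (G : SimpleGraph V) {x y : V} (p : G.Walk x y) : Prop :=
  p.IsPath ∧ ∀ ⦃u v⦄, u ∈ p.support → v ∈ p.support → G.Adj u v → s(u, v) ∈ p.edges

/-- A graph is distance-hereditary if any two induced paths between the same pair of
vertices have the same length. -/
def IsDistanceHereditary {V : Type} (G : SimpleGraph V) : Prop :=
  ∀ (x y : V) (p q : G.Walk x y),
    IsInducedPathW G p → IsInducedPathW G q → p.length = q.length

/-- `X` is a module of `G`: every outside vertex is adjacent to all of `X` or none of it. -/
def IsModule {V : Type} (G : SimpleGraph V) (X : Set V) : Prop :=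
  ∀ y ∉ X, (∀ x ∈ X, G.Adj y x) ∨ ∀ x ∈ X, ¬G.Adj y x

/-- `X` is a strong module of `G`: a module of size at least two which overlaps
no other module. -/
def IsStrongModule {V : Type} (G : SimpleGraph V) (X : Set V) : Prop :=
  IsModule G X ∧ 2 ≤ X.ncard ∧
    ∀ M : Set V, IsModule G M → Disjoint M X ∨ M ⊆ X ∨ X ⊆ M

/-- The setoid identifying all elements of `C`. -/
def mergedSetoid {V : Type} (C : Set V) : Setoid V where
  r x y := x = y ∨ (x ∈ C ∧ y ∈ C)
  iseqv := by
    refine ⟨fun x => Or.inl rfl, ?_, ?_⟩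
    · rintro x y (rfl | ⟨h1, h2⟩)
      · exact Or.inl rfl
      · exact Or.inr ⟨h2, h1⟩
    · rintro x y z (rfl | ⟨h1, h2⟩) (rfl | ⟨h3, h4⟩)
      · exact Or.inl rfl
      · exact Or.inr ⟨h3, h4⟩
      · exact Or.inr ⟨h1, h2⟩
      · exact Or.inr ⟨h1, h4⟩

/-- The merged graph on an independent set `C`: all vertices of `C` are identified
into a single vertex. -/
def mergedGraph {V : Type} (G : SimpleGraph V) (C : Set V)
    (hC : ∀ x ∈ C, ∀ y ∈ C, ¬G.Adj x y) :
    SimpleGraph (Quotient (mergedSetoid C)) where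
  Adj a b := ∃ x y, G.Adj x y ∧ Quotient.mk (mergedSetoid C) x = a ∧
    Quotient.mk (mergedSetoid C) y = b
  symm := by
    constructor
    rintro a b ⟨x, y, hxy, rfl, rfl⟩
    exact ⟨y, x, hxy.symm, rfl, rfl⟩
  loopless := by
    constructor
    rintro a ⟨x, y, hxy, rfl, h⟩
    rcases Quotient.exact h with rfl | ⟨h1, h2⟩
    · exact G.loopless.irrefl _ hxy
    · exact hC x h2 y h1 hxy

/-- `α` can be transformed into `β` by single-vertex recolorings through proper
`k`-colorings of `G`, recoloring each vertex `v` at most `bound v` times. -/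
def RecolorSeqLe {V : Type} (G : SimpleGraph V) {k : ℕ} (α β : V → Fin k)
    (bound : V → ℕ) : Prop :=
  ∃ (m : ℕ) (c : ℕ → V → Fin k),
    c 0 = α ∧ c m = β ∧ (∀ i ≤ m, Proper G (c i)) ∧
    (∀ i < m, ∃! v, c i v ≠ c (i + 1) v) ∧
    ∀ v, ((Finset.range m).filter fun i => c i v ≠ c (i + 1) v).card ≤ bound v

/-- A modular coloring: for every strong module `M` which is the disjoint union of
`p ≥ 2` strong modules `Ms 0, …, Ms (p-1)`, the coloring uses exactly `χ(H[M])`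
colors on `M`, and each `Ms i` receives exactly the first `χ(H[Ms i])` of those colors. -/
def ModularColoring {W : Type} (H : SimpleGraph W) {k : ℕ} (c : W → Fin k) : Prop :=
  ∀ (M : Set W) (p : ℕ) (Ms : Fin p → Set W), 2 ≤ p →
    IsStrongModule H M → (∀ i, IsStrongModule H (Ms i)) →
    (Pairwise fun i j => Disjoint (Ms i) (Ms j)) →
    M = ⋃ i, Ms i →
    (∀ i j, i ≠ j → ∀ x ∈ Ms i, ∀ y ∈ Ms j, ¬H.Adj x y) →
    ((c '' M).ncard : ℕ∞) = (H.induce M).chromaticNumber ∧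
    ∀ i, ((c '' Ms i).ncard : ℕ∞) = (H.induce (Ms i)).chromaticNumber ∧
      ∀ a ∈ c '' Ms i, ∀ b ∈ c '' M, b ≤ a → b ∈ c '' Ms i

/-- A frozen `k`-coloring: a proper coloring in which every vertex sees every other
color in its neighborhood. -/
def Frozen {V : Type} (G : SimpleGraph V) {k : ℕ} (c : V → Fin k) : Prop :=
  Proper G c ∧ ∀ x, ∀ b : Fin k, b ≠ c x → ∃ y, G.Adj x y ∧ c y = b

namespace GM

/-- smallest natural not in `s` -/
noncomputable def mex (s : Finset ℕ) : ℕ := sInf {m | m ∉ s}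

lemma mex_set_nonempty (s : Finset ℕ) : {m | m ∉ s}.Nonempty :=
  ⟨s.sup id + 1, fun h => by
    have := Finset.le_sup (f := id) h
    simp only [id] at this; omega⟩

lemma mex_not_mem (s : Finset ℕ) : mex s ∉ s := Nat.sInf_mem (mex_set_nonempty s)

lemma mem_of_lt_mex {s : Finset ℕ} {b : ℕ} (hb : b < mex s) : b ∈ s := by
  by_contra hb'
  have h2 := Nat.sInf_le (s := {m | m ∉ s}) hb'
  unfold mex at hb; omega

variable {n : ℕ} (G : SimpleGraph (Fin n))

/-- extension of a partial grundy coloring to a full grundy coloring -/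
lemma ext_lemma : ∀ (m : ℕ) (W : Finset (Fin n)) (C : Fin n → ℕ),
    (Finset.univ \ W).card ≤ m →
    (∀ x ∈ W, ∀ y ∈ W, G.Adj x y → C x ≠ C y) →
    (∀ x ∈ W, ∀ l < C x, ∃ y ∈ W, G.Adj x y ∧ C y = l) →
    ∃ C' : Fin n → ℕ, IsGrundy G C' ∧ ∀ x ∈ W, C' x = C x := by
  classical
  intro m
  induction m with
  | zero =>
    intro W C hcard hp hw
    have hWuniv : ∀ x : Fin n, x ∈ W := by
      intro x
      by_contra hx
      have : x ∈ Finset.univ \ W := by simp [hx]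
      have : 0 < (Finset.univ \ W).card := Finset.card_pos.2 ⟨x, this⟩
      omega
    exact ⟨C, ⟨fun x y h => hp x (hWuniv x) y (hWuniv y) h,
      fun v j hj => by
        obtain ⟨y, _, hadj, hy⟩ := hw v (hWuniv v) j hj
        exact ⟨y, hadj, hy⟩⟩, fun x _ => rfl⟩
  | succ m ih =>
    intro W C hcard hp hw
    by_cases hWuniv : ∀ x : Fin n, x ∈ W
    · exact ⟨C, ⟨fun x y h => hp x (hWuniv x) y (hWuniv y) h,
        fun v j hj => by
          obtain ⟨y, _, hadj, hy⟩ := hw v (hWuniv v) j hj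
          exact ⟨y, hadj, hy⟩⟩, fun x _ => rfl⟩
    · push_neg at hWuniv
      obtain ⟨v, hv⟩ := hWuniv
      set Ns : Finset ℕ := (W.filter (fun u => G.Adj v u)).image C with hNs
      set C' : Fin n → ℕ := Function.update C v (mex Ns) with hC'
      have hC'W : ∀ x ∈ W, C' x = C x := by
        intro x hx
        have : x ≠ v := fun h => hv (h ▸ hx)
        simp [hC', Function.update_of_ne this]
      have hcard' : (Finset.univ \ insert v W).card ≤ m := by
        have h1 : (Finset.univ \ W).card ≤ m + 1 := hcard
        have h2 : Finset.univ \ insert v W = (Finset.univ \ W).erase v := by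
          ext x
          simp only [Finset.mem_sdiff, Finset.mem_univ, Finset.mem_insert,
            Finset.mem_erase, true_and]
          tauto
        rw [h2]
        have hvmem : v ∈ Finset.univ \ W := by simp [hv]
        have := Finset.card_erase_of_mem hvmem
        omega
      have hC'v : C' v = mex Ns := by simp [hC']
      have hkey : ∀ y ∈ W, G.Adj v y → C' v ≠ C' y := by
        intro y hy hadj
        rw [hC'W y hy, hC'v]
        have hmem : C y ∈ Ns := Finset.mem_image.2 ⟨y, Finset.mem_filter.2 ⟨hy, hadj⟩, rfl⟩
        intro h; exact mex_not_mem Ns (h ▸ hmem)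
      have hp' : ∀ x ∈ insert v W, ∀ y ∈ insert v W, G.Adj x y → C' x ≠ C' y := by
        intro x hx y hy hadj
        rcases Finset.mem_insert.1 hx with h1 | h1
        · rcases Finset.mem_insert.1 hy with h2 | h2
          · subst h1; subst h2; exact absurd hadj (G.loopless.irrefl _)
          · subst h1; exact hkey y h2 hadj
        · rcases Finset.mem_insert.1 hy with h2 | h2
          · subst h2; exact (hkey x h1 hadj.symm).symm
          · rw [hC'W x h1, hC'W y h2]; exact hp x h1 y h2 hadj
      have hw' : ∀ x ∈ insert v W, ∀ l < C' x, ∃ y ∈ insert v W, G.Adj x y ∧ C' y = l := by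
        intro x hx l hl
        rcases Finset.mem_insert.1 hx with h1 | h1
        · subst h1
          rw [hC'v] at hl
          have : l ∈ Ns := mem_of_lt_mex hl
          obtain ⟨y, hy, hyl⟩ := Finset.mem_image.1 this
          obtain ⟨hyW, hadj⟩ := Finset.mem_filter.1 hy
          exact ⟨y, Finset.mem_insert_of_mem hyW, hadj, (hC'W y hyW).trans hyl⟩
        · rw [hC'W x h1] at hl
          obtain ⟨y, hyW, hadj, hy⟩ := hw x h1 l hl
          exact ⟨y, Finset.mem_insert_of_mem hyW, hadj, (hC'W y hyW).trans hy⟩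
      obtain ⟨C'', hg, heq⟩ := ih (insert v W) C' hcard' hp' hw'
      exact ⟨C'', hg, fun x hx => (heq x (Finset.mem_insert_of_mem hx)).trans (hC'W x hx)⟩

lemma grundy_bddAbove :
    BddAbove {ℓ | ∃ c : Fin n → ℕ, IsGrundy G c ∧ (Finset.univ.image c).card = ℓ} := by
  refine ⟨n, fun ℓ hℓ => ?_⟩
  obtain ⟨c, _, hc⟩ := hℓ
  calc ℓ = (Finset.univ.image c).card := hc.symm
    _ ≤ (Finset.univ : Finset (Fin n)).card := Finset.card_image_le
    _ = n := by simp

lemma isGrundy_lt_card_image {C : Fin n → ℕ} (h : IsGrundy G C) (v : Fin n) :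
    C v < (Finset.univ.image C).card := by
  classical
  have hsub : Finset.range (C v + 1) ⊆ Finset.univ.image C := by
    intro m hm
    rw [Finset.mem_range] at hm
    rcases Nat.lt_or_ge m (C v) with hlt | hge
    · obtain ⟨u, _, hu⟩ := h.2 v m hlt
      exact Finset.mem_image.2 ⟨u, Finset.mem_univ u, hu⟩
    · have : m = C v := by omega
      exact Finset.mem_image.2 ⟨v, Finset.mem_univ v, this.symm⟩
  have := Finset.card_le_card hsub
  simpa using this

/-- bound colors of a locally grundy partial coloring by the grundy number -/
lemma glb (W : Finset (Fin n)) (C : Fin n → ℕ)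
    (hp : ∀ x ∈ W, ∀ y ∈ W, G.Adj x y → C x ≠ C y)
    (hw : ∀ x ∈ W, ∀ l < C x, ∃ y ∈ W, G.Adj x y ∧ C y = l) :
    ∀ x ∈ W, C x < grundyNum G := by
  obtain ⟨C', hg, heq⟩ := ext_lemma G (Finset.univ \ W).card W C le_rfl hp hw
  intro x hx
  have h1 : C x = C' x := (heq x hx).symm
  have h2 : C' x < (Finset.univ.image C').card := isGrundy_lt_card_image G hg x
  have h3 : (Finset.univ.image C').card ≤ grundyNum G :=
    le_csSup (grundy_bddAbove G) ⟨C', hg, rfl⟩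
  omega

end GM
namespace GM2
open SimpleGraph Finset GM

variable {n k : ℕ} {G : SimpleGraph (Fin n)}

/-- reachability in the recoloring graph within `m` steps -/
def Reach (G : SimpleGraph (Fin n)) (k : ℕ) (a b : {c : Fin n → Fin k // Proper G c}) (m : ℕ) : Prop :=
  ∃ w : (recolorGraph G k).Walk a b, w.length ≤ m

lemma Reach.mono {a b : {c : Fin n → Fin k // Proper G c}} {m m' : ℕ}
    (h : Reach G k a b m) (hm : m ≤ m') : Reach G k a b m' :=
  ⟨h.choose, le_trans h.choose_spec hm⟩

lemma Reach.refl (a : {c : Fin n → Fin k // Proper G c}) (m : ℕ) : Reach G k a a m :=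
  ⟨SimpleGraph.Walk.nil, by simp⟩

lemma Reach.trans {a b c : {c : Fin n → Fin k // Proper G c}} {m m' : ℕ}
    (h : Reach G k a b m) (h' : Reach G k b c m') : Reach G k a c (m + m') := by
  obtain ⟨w, hw⟩ := h
  obtain ⟨w', hw'⟩ := h'
  exact ⟨w.append w', by rw [SimpleGraph.Walk.length_append]; omega⟩

lemma reach_of_eq {a b : {c : Fin n → Fin k // Proper G c}} (h : a.1 = b.1) (m : ℕ) :
    Reach G k a b m := by
  have : a = b := Subtype.ext h
  subst this; exact Reach.refl a m

/-- One-pass realization lemma: turn `c` into target `τ` one vertex at a time,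
in increasing order of `ord`. -/
lemma realize_aux (ord : Fin n → ℕ)
    (hinj : ∀ x y : Fin n, G.Adj x y → ord x ≠ ord y)
    (τ : Fin n → Fin k) (hτ : Proper G τ) :
    ∀ (m : ℕ) (c : Fin n → Fin k) (hc : Proper G c),
    (∀ x y, G.Adj x y → ord x < ord y → τ x ≠ c y) →
    (Finset.univ.filter fun v => c v ≠ τ v).card ≤ m →
    Reach G k ⟨c, hc⟩ ⟨τ, hτ⟩ m := by
  classical
  intro m
  induction m with
  | zero =>
    intro c hc _ hcard
    have : ∀ v, c v = τ v := by
      intro v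
      by_contra hv
      have : v ∈ Finset.univ.filter fun v => c v ≠ τ v := by simp [hv]
      have := Finset.card_pos.2 ⟨v, this⟩
      omega
    exact reach_of_eq (funext this) 0
  | succ m ih =>
    intro c hc hcond hcard
    by_cases hall : ∀ v, c v = τ v
    · exact reach_of_eq (funext hall) _
    · push_neg at hall
      set D := Finset.univ.filter fun v => c v ≠ τ v with hD
      have hDne : D.Nonempty := by
        obtain ⟨v, hv⟩ := hall
        exact ⟨v, by simp [hD, hv]⟩
      obtain ⟨v, hvD, hvmin⟩ := Finset.exists_min_image D ord hDne
      have hvne : c v ≠ τ v := (Finset.mem_filter.1 hvD).2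
      set c' : Fin n → Fin k := Function.update c v (τ v) with hc'def
      have hc'v : c' v = τ v := by simp [hc'def]
      have hc'ne : ∀ w, w ≠ v → c' w = c w := fun w hw => Function.update_of_ne hw _ _
      -- key: recoloring v to τ v keeps the coloring proper
      have hfree : ∀ x, G.Adj v x → τ v ≠ c x := by
        intro x hadj
        rcases lt_or_ge (ord v) (ord x) with hlt | hle
        · exact hcond v x hadj hlt
        · have hne := hinj v x hadj
          have hlt : ord x < ord v := by omega
          have hx : x ∉ D := by
            intro hx
            exact absurd (hvmin x hx) (by omega)
          have : c x = τ x := by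
            by_contra h
            exact hx (by simp [hD, h])
          rw [this]
          exact fun h => (hτ hadj.symm) (h.symm)
      have hc'p : Proper G c' := by
        intro x y hadj
        rcases eq_or_ne x v with rfl | hx
        · rw [hc'v, hc'ne y (G.ne_of_adj hadj).symm]
          exact hfree y hadj
        · rcases eq_or_ne y v with rfl | hy
          · rw [hc'v, hc'ne x hx]
            exact fun h => (hfree x hadj.symm) h.symm
          · rw [hc'ne x hx, hc'ne y hy]; exact hc hadj
      have hcond' : ∀ x y, G.Adj x y → ord x < ord y → τ x ≠ c' y := by
        intro x y hadj hlt
        rcases eq_or_ne y v with rfl | hy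
        · rw [hc'v]; exact hτ hadj
        · rw [hc'ne y hy]; exact hcond x y hadj hlt
      have hD' : (Finset.univ.filter fun w => c' w ≠ τ w) = D.erase v := by
        ext w
        rcases eq_or_ne w v with rfl | hw
        · simp [hc'v]
        · simp [hc'ne w hw, hD, hw]
      have hcard' : (Finset.univ.filter fun w => c' w ≠ τ w).card ≤ m := by
        rw [hD', Finset.card_erase_of_mem hvD]
        omega
      have hstep : (recolorGraph G k).Adj ⟨c, hc⟩ ⟨c', hc'p⟩ := by
        refine ⟨v, ?_, ?_⟩
        · show c v ≠ c' v
          rw [hc'v]; exact hvne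
        · intro w hw
          have hw' : c w ≠ c' w := hw
          by_contra hwv
          exact hw' (by rw [hc'ne w hwv])
      obtain ⟨w, hwlen⟩ := ih c' hc'p hcond' hcard'
      exact ⟨SimpleGraph.Walk.cons hstep w, by simpa using Nat.succ_le_succ hwlen⟩

lemma realize (ord : Fin n → ℕ)
    (hinj : ∀ x y : Fin n, G.Adj x y → ord x ≠ ord y)
    (c τ : Fin n → Fin k) (hc : Proper G c) (hτ : Proper G τ)
    (hcond : ∀ x y, G.Adj x y → ord x < ord y → τ x ≠ c y) :
    Reach G k ⟨c, hc⟩ ⟨τ, hτ⟩ (Finset.univ.filter fun v => c v ≠ τ v).card :=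
  realize_aux ord hinj τ hτ _ c hc hcond le_rfl

/-- lexicographic order key -/
def lexOrd (key : Fin n → ℕ) : Fin n → ℕ := fun v => key v * n + v.val

lemma lexOrd_aux {key : Fin n → ℕ} {x y : Fin n} (h : key x < key y) :
    lexOrd key x < lexOrd key y := by
  unfold lexOrd
  have hx := x.isLt
  calc key x * n + x.val < key x * n + n := by omega
  _ = (key x + 1) * n := by ring
  _ ≤ key y * n := Nat.mul_le_mul_right n h
  _ ≤ key y * n + y.val := Nat.le_add_right _ _

lemma lexOrd_inj (key : Fin n → ℕ) {x y : Fin n} (h : lexOrd key x = lexOrd key y) : x = y := by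
  have hkey : key x = key y := by
    rcases lt_trichotomy (key x) (key y) with h1 | h1 | h1
    · exact absurd (lexOrd_aux h1) (by omega)
    · exact h1
    · exact absurd (lexOrd_aux h1) (by omega)
  unfold lexOrd at h
  rw [hkey] at h
  have : x.val = y.val := by omega
  exact Fin.ext this

lemma lexOrd_lt_key {key : Fin n → ℕ} {x y : Fin n} (h : lexOrd key x < lexOrd key y) :
    key x ≤ key y := by
  by_contra hk
  push_neg at hk
  exact absurd (lexOrd_aux hk) (by omega)

end GM2
namespace GM3
open SimpleGraph Finset GM GM2

variable {n k : ℕ}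

noncomputable def fresh (hk0 : 0 < k) (s : Finset (Fin k)) : Fin k :=
  if h : sᶜ.Nonempty then sᶜ.min' h else ⟨0, hk0⟩

lemma fresh_spec {hk0 : 0 < k} {s : Finset (Fin k)} {a : Fin k} (ha : a ∉ s) :
    fresh hk0 s ∉ s ∧ fresh hk0 s ≤ a ∧ ∀ b, b < fresh hk0 s → b ∈ s := by
  classical
  have hne : sᶜ.Nonempty := ⟨a, Finset.mem_compl.2 ha⟩
  have h1 : fresh hk0 s = sᶜ.min' hne := by
    unfold fresh
    rw [dif_pos hne]
  refine ⟨?_, ?_, ?_⟩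
  · rw [h1]
    exact Finset.mem_compl.1 (Finset.min'_mem _ hne)
  · rw [h1]
    exact Finset.min'_le _ a (Finset.mem_compl.2 ha)
  · intro b hb
    rw [h1] at hb
    by_contra hbs
    exact absurd (Finset.min'_le _ b (Finset.mem_compl.2 hbs)) (by omega)

lemma fresh_eq {hk0 : 0 < k} {s : Finset (Fin k)} {a : Fin k} (ha : a ∉ s)
    (hall : ∀ b, b ≠ a → b ∈ s) : fresh hk0 s = a := by
  by_contra h
  exact (fresh_spec ha).1 (hall _ h)

variable (G : SimpleGraph (Fin n)) [DecidableRel G.Adj]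

noncomputable def greedyC (hk0 : 0 < k) (base : Fin n → Finset (Fin k)) (ord : Fin n → ℕ)
    (v : Fin n) : Fin k :=
  fresh hk0 (base v ∪
    ((Finset.univ.filter (fun u => G.Adj u v ∧ ord u < ord v)).attach.image
      (fun u => greedyC hk0 base ord u.1)))
termination_by ord v
decreasing_by
  exact (Finset.mem_filter.mp u.2).2.2

/-- the forbidden set for `v` -/
noncomputable def forb (hk0 : 0 < k) (base : Fin n → Finset (Fin k)) (ord : Fin n → ℕ)
    (v : Fin n) : Finset (Fin k) :=
  base v ∪
    ((Finset.univ.filter (fun u => G.Adj u v ∧ ord u < ord v)).attach.image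
      (fun u => greedyC G hk0 base ord u.1))

lemma greedyC_def (hk0 : 0 < k) (base : Fin n → Finset (Fin k)) (ord : Fin n → ℕ)
    (v : Fin n) : greedyC G hk0 base ord v = fresh hk0 (forb G hk0 base ord v) := by
  rw [greedyC, forb]

lemma mem_forb {hk0 : 0 < k} {base : Fin n → Finset (Fin k)} {ord : Fin n → ℕ}
    {v : Fin n} {b : Fin k} :
    b ∈ forb G hk0 base ord v ↔
      b ∈ base v ∨ ∃ u, G.Adj u v ∧ ord u < ord v ∧ greedyC G hk0 base ord u = b := by
  unfold forb
  constructor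
  · intro h
    rcases Finset.mem_union.1 h with h | h
    · exact Or.inl h
    · obtain ⟨u, -, hu⟩ := Finset.mem_image.1 h
      have hu2 := Finset.mem_filter.1 u.2
      exact Or.inr ⟨u.1, hu2.2.1, hu2.2.2, hu⟩
  · rintro (h | ⟨u, h1, h2, h3⟩)
    · exact Finset.mem_union_left _ h
    · refine Finset.mem_union_right _ (Finset.mem_image.2 ?_)
      exact ⟨⟨u, Finset.mem_filter.2 ⟨Finset.mem_univ u, h1, h2⟩⟩, Finset.mem_attach _ _, h3⟩

end GM3
namespace GM4
open SimpleGraph Finset GM GM2 GM3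

variable {n k : ℕ} (G : SimpleGraph (Fin n)) [DecidableRel G.Adj]
variable (hk0 : 0 < k) (α : Fin n → Fin k)

/-- order for the preprocessing pass : sort by color -/
def ordPre : Fin n → ℕ := lexOrd (fun v => (α v).val)

noncomputable def basePre : Fin n → Finset (Fin k) := fun v =>
  (Finset.univ.filter (fun u => G.Adj u v ∧ ordPre α v < ordPre α u)).image α

noncomputable def tauPre : Fin n → Fin k := greedyC G hk0 (basePre G α) (ordPre α)

lemma tauPre_def : tauPre G hk0 α = greedyC G hk0 (basePre G α) (ordPre α) := rfl

variable {G hk0 α}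

omit [DecidableRel G.Adj] in
lemma ordPre_adj_ne (_hprop : Proper G α) {x y : Fin n} (h : G.Adj x y) :
    ordPre α x ≠ ordPre α y :=
  fun he => (G.ne_of_adj h) (lexOrd_inj _ he)

lemma alpha_not_forb (hprop : Proper G α) :
    ∀ v, α v ∉ forb G hk0 (basePre G α) (ordPre α) v := by
  have key : ∀ N v, ordPre α v < N → α v ∉ forb G hk0 (basePre G α) (ordPre α) v := by
    intro N
    induction N with
    | zero => intro v hv; omega
    | succ N ih =>
      intro v hv hmem
      rcases (mem_forb G).1 hmem with hb | ⟨u, hadj, hlt, heq⟩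
      · obtain ⟨u, hu, hequ⟩ := Finset.mem_image.1 hb
        have hu2 := Finset.mem_filter.1 hu
        exact hprop hu2.2.1 hequ
      · have hIH := ih u (by omega)
        have hspec := fresh_spec (hk0 := hk0) hIH
        rw [← greedyC_def] at hspec
        apply hspec.1
        rw [mem_forb]
        left
        refine Finset.mem_image.2 ⟨v, Finset.mem_filter.2 ⟨Finset.mem_univ v, hadj.symm, hlt⟩, ?_⟩
        exact heq.symm
  intro v
  exact key (ordPre α v + 1) v (by omega)

lemma tauPre_spec (hprop : Proper G α) (v : Fin n) :
    tauPre G hk0 α v ∉ forb G hk0 (basePre G α) (ordPre α) v ∧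
    tauPre G hk0 α v ≤ α v ∧
    ∀ b, b < tauPre G hk0 α v → b ∈ forb G hk0 (basePre G α) (ordPre α) v := by
  have h := fresh_spec (hk0 := hk0) (alpha_not_forb (hk0 := hk0) hprop v)
  have e : tauPre G hk0 α v = fresh hk0 (forb G hk0 (basePre G α) (ordPre α) v) := by
    rw [tauPre_def, greedyC_def]
  rw [e]
  exact h

lemma tauPre_proper (hprop : Proper G α) : Proper G (tauPre G hk0 α) := by
  intro x y hadj heq
  have hne := ordPre_adj_ne hprop hadj
  rcases Nat.lt_or_ge (ordPre α x) (ordPre α y) with hlt | hge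
  · apply (tauPre_spec (hk0 := hk0) hprop y).1
    rw [mem_forb]
    exact Or.inr ⟨x, hadj, hlt, heq⟩
  · apply (tauPre_spec (hk0 := hk0) hprop x).1
    rw [mem_forb]
    exact Or.inr ⟨y, hadj.symm, by omega, heq.symm⟩

lemma tauPre_cond (hprop : Proper G α) :
    ∀ x y, G.Adj x y → ordPre α x < ordPre α y → tauPre G hk0 α x ≠ α y := by
  intro x y hadj hlt heq
  apply (tauPre_spec (hk0 := hk0) hprop x).1
  rw [mem_forb]
  left
  exact Finset.mem_image.2 ⟨y, Finset.mem_filter.2 ⟨Finset.mem_univ y, hadj.symm, hlt⟩, heq.symm⟩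

lemma tauPre_grundy (hprop : Proper G α) :
    ∀ v, ∀ l : ℕ, l < (tauPre G hk0 α v).val →
      ∃ u, G.Adj v u ∧ (tauPre G hk0 α u).val = l := by
  intro v l hl
  have hlk : l < k := lt_trans hl (tauPre G hk0 α v).isLt
  have hb : (⟨l, hlk⟩ : Fin k) < tauPre G hk0 α v := by
    rw [Fin.lt_def]; exact hl
  have hmem := (tauPre_spec hprop v).2.2 _ hb
  rcases (mem_forb G).1 hmem with hbase | ⟨u, hadj, hlt, heq⟩
  · exfalso
    obtain ⟨u, hu, hequ⟩ := Finset.mem_image.1 hbase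
    have hu2 := Finset.mem_filter.1 hu
    -- u is later in the order, so α u ≥ α v ≥ τ v > l = α u , contradiction
    have hlex : lexOrd (fun w => (α w).val) v < lexOrd (fun w => (α w).val) u := hu2.2.2
    have h1 : (α v).val ≤ (α u).val := lexOrd_lt_key (key := fun w : Fin n => (α w).val) hlex
    have h2 : (tauPre G hk0 α v).val ≤ (α v).val := (tauPre_spec hprop v).2.1
    have h3 : (α u).val = l := by rw [hequ]
    omega
  · refine ⟨u, hadj.symm, ?_⟩
    rw [tauPre_def, heq]

lemma tauPre_reach (hprop : Proper G α) :
    Reach G k ⟨α, hprop⟩ ⟨tauPre G hk0 α, tauPre_proper hprop⟩ n := by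
  have h := realize (ordPre α) (fun x y h => ordPre_adj_ne hprop h)
    α (tauPre G hk0 α) hprop (tauPre_proper hprop)
    (fun x y hadj hlt => tauPre_cond hprop x y hadj hlt)
  apply h.mono
  calc (Finset.univ.filter fun v => α v ≠ tauPre G hk0 α v).card
      ≤ (Finset.univ : Finset (Fin n)).card := Finset.card_filter_le _ _
    _ = n := by simp

end GM4
namespace GM5
open SimpleGraph Finset GM GM2 GM3

variable {n k t : ℕ}

def Pin (g : Fin n → Fin t) (i : ℕ) (c : Fin n → Fin k) : Prop :=
  ∀ v, (g v : ℕ) < i → (c v : ℕ) = (g v : ℕ)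

def Stab (G : SimpleGraph (Fin n)) (g : Fin n → Fin t) (i : ℕ) (c : Fin n → Fin k) : Prop :=
  ∀ v, i ≤ (g v : ℕ) →
    i ≤ (c v : ℕ) ∧ ∀ l : ℕ, i ≤ l → l < (c v : ℕ) → ∃ u, G.Adj v u ∧ (c u : ℕ) = l

variable {G : SimpleGraph (Fin n)} {g : Fin n → Fin t}

lemma colorBound
    (hgp : ∀ ⦃x y⦄, G.Adj x y → g x ≠ g y)
    (hdom : ∀ v, ∀ l : ℕ, l < (g v : ℕ) → ∃ u, G.Adj v u ∧ (g u : ℕ) = l)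
    {i : ℕ} {c : Fin n → Fin k} (hc : Proper G c)
    (hpin : Pin g i c) (hstab : Stab G g i c) :
    ∀ v, (c v : ℕ) < grundyNum G := by
  have h := glb G Finset.univ (fun v => (c v : ℕ))
    (by
      intro x _ y _ hadj heq
      exact hc hadj (Fin.ext heq))
    (by
      intro x _ l hl
      have hl' : l < (c x : ℕ) := hl
      rcases Nat.lt_or_ge (g x : ℕ) i with hx | hx
      · -- x pinned
        have hcx : (c x : ℕ) = (g x : ℕ) := hpin x hx
        obtain ⟨u, hadj, hu⟩ := hdom x l (by omega)
        have hupin : (c u : ℕ) = (g u : ℕ) := hpin u (by omega)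
        exact ⟨u, Finset.mem_univ u, hadj, show (c u : ℕ) = l by omega⟩
      · rcases Nat.lt_or_ge l i with hli | hli
        · obtain ⟨u, hadj, hu⟩ := hdom x l (by omega)
          have hupin : (c u : ℕ) = (g u : ℕ) := hpin u (by omega)
          exact ⟨u, Finset.mem_univ u, hadj, show (c u : ℕ) = l by omega⟩
        · obtain ⟨u, hadj, hu⟩ := (hstab x hx).2 l hli hl'
          exact ⟨u, Finset.mem_univ u, hadj, show (c u : ℕ) = l from hu⟩)
  exact fun v => h v (Finset.mem_univ v)

variable [DecidableRel G.Adj]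

lemma phase_step
    (hgp : ∀ ⦃x y⦄, G.Adj x y → g x ≠ g y)
    (hdom : ∀ v, ∀ l : ℕ, l < (g v : ℕ) → ∃ u, G.Adj v u ∧ (g u : ℕ) = l)
    (htΓ : t ≤ grundyNum G) (hΓk : grundyNum G + 1 ≤ k)
    (i : ℕ) (hi : i < t) (c : Fin n → Fin k) (hc : Proper G c)
    (hpin : Pin g i c) (hstab : Stab G g i c) :
    ∃ (c' : Fin n → Fin k) (hc' : Proper G c'), Pin g (i + 1) c' ∧ Stab G g (i + 1) c' ∧
      Reach G k ⟨c, hc⟩ ⟨c', hc'⟩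
        ((Finset.univ.filter fun v => i + 1 ≤ (g v : ℕ)).card +
          (Finset.univ.filter fun v => i ≤ (g v : ℕ)).card) := by
  classical
  set Γ : ℕ := grundyNum G with hΓdef
  have hk0 : 0 < k := by omega
  have hcΓ : ∀ v, (c v : ℕ) < Γ := colorBound hgp hdom hc hpin hstab
  -- ================== PASS 1 : park the vertices of S at color k-1 =============
  set topc : Fin k := ⟨k - 1, by omega⟩ with htopc
  set inS : Fin n → Prop := fun v => i + 1 ≤ (g v : ℕ) ∧ (c v : ℕ) = i with hinS
  have hinS_dec : DecidablePred inS := fun v => by unfold inS; infer_instance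
  set ch : Fin n → Fin k := fun v => if inS v then topc else c v with hch
  have hch_inS : ∀ v, inS v → ch v = topc := by
    intro v hv
    simp only [hch]
    rw [if_pos hv]
  have hch_notS : ∀ v, ¬inS v → ch v = c v := by
    intro v hv
    simp only [hch]
    rw [if_neg hv]
  have hchp : Proper G ch := by
    intro x y hadj heq
    by_cases hx : inS x <;> by_cases hy : inS y
    · exact hc hadj (Fin.ext (by omega : (c x : ℕ) = (c y : ℕ)))
    · rw [hch_inS x hx, hch_notS y hy] at heq
      have h1 := hcΓ y
      have h2 : (topc : ℕ) = (c y : ℕ) := by rw [heq]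
      have h3 : (topc : ℕ) = k - 1 := rfl
      omega
    · rw [hch_notS x hx, hch_inS y hy] at heq
      have h1 := hcΓ x
      have h2 : (c x : ℕ) = (topc : ℕ) := by rw [heq]
      have h3 : (topc : ℕ) = k - 1 := rfl
      omega
    · rw [hch_notS x hx, hch_notS y hy] at heq
      exact hc hadj heq
  have hreach1 : Reach G k ⟨c, hc⟩ ⟨ch, hchp⟩
      (Finset.univ.filter fun v => i + 1 ≤ (g v : ℕ)).card := by
    have h := realize (G := G) (lexOrd fun v => if inS v then 1 else 0)
      (fun x y hadj heq => G.ne_of_adj hadj (lexOrd_inj _ heq))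
      c ch hc hchp ?_
    · apply h.mono
      apply Finset.card_le_card
      intro v hv
      have hv2 := (Finset.mem_filter.1 hv).2
      have hvS : inS v := by
        by_contra h3
        exact hv2 (hch_notS v h3).symm
      exact Finset.mem_filter.2 ⟨Finset.mem_univ v, hvS.1⟩
    · intro x y hadj hlt heq
      have hkey := lexOrd_lt_key hlt
      by_cases hx : inS x
      · simp only [hx, if_pos] at hkey
        have hy : inS y := by
          by_contra hy
          simp [hy] at hkey
        exact hc hadj (Fin.ext (by omega : (c x : ℕ) = (c y : ℕ)))
      · rw [hch_notS x hx] at heq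
        exact hc hadj heq
  -- ================== PASS 2 : greedy recoloring ==============================
  set key2 : Fin n → ℕ := fun v =>
    if (g v : ℕ) ≤ i then 0 else if (c v : ℕ) = i then k + 1 else (c v : ℕ) + 1 with hkey2
  set ord2 : Fin n → ℕ := lexOrd key2 with hord2
  have hforcedlt : ∀ v : Fin n, (g v : ℕ) < k := fun v => by
    have := (g v).isLt; omega
  set forced : Fin n → Fin k := fun v => ⟨(g v : ℕ), hforcedlt v⟩ with hforced
  set base2 : Fin n → Finset (Fin k) := fun v =>
    if (g v : ℕ) ≤ i then Finset.univ.filter (fun a : Fin k => a ≠ forced v)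
    else Finset.univ.filter (fun a : Fin k => (a : ℕ) ≤ i) with hbase2
  set τ : Fin n → Fin k := greedyC G hk0 base2 ord2 with hτ
  have hτdef : ∀ v, τ v = fresh hk0 (forb G hk0 base2 ord2 v) := fun v => greedyC_def _ _ _ _ v
  set ΓF : Fin k := ⟨Γ, by omega⟩ with hΓF
  -- keys of pinned vertices are 0 and conversely
  have hkey2_pinned : ∀ v, (g v : ℕ) ≤ i → key2 v = 0 := fun v hv => by
    simp [hkey2, hv]
  have hkey2_unpinned : ∀ v, ¬((g v : ℕ) ≤ i) → key2 v ≠ 0 := fun v hv => by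
    simp only [hkey2, if_neg hv]
    split <;> omega
  -- F-pinned : pinned vertices get their forced color, which is not in their forbidden set
  have hFpin : ∀ N v, ord2 v < N → (g v : ℕ) ≤ i →
      forced v ∉ forb G hk0 base2 ord2 v ∧ τ v = forced v := by
    intro N
    induction N with
    | zero => intro v hv; omega
    | succ N ih =>
      intro v hv hgvi
      have hnot : forced v ∉ forb G hk0 base2 ord2 v := by
        rw [mem_forb]
        rintro (hb | ⟨u, hadj, hlt, heq⟩)
        · rw [hbase2] at hb
          simp only [if_pos hgvi, Finset.mem_filter] at hb
          exact hb.2 rfl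
        · -- u is earlier, hence pinned
          have hkle := lexOrd_lt_key (key := key2) hlt
          rw [hkey2_pinned v hgvi] at hkle
          have hgui : (g u : ℕ) ≤ i := by
            by_contra h3
            exact hkey2_unpinned u h3 (by omega)
          have hτu : τ u = forced u := (ih u (by omega) hgui).2
          have heq2 : τ u = forced v := heq
          rw [hτu] at heq2
          have h5 : (g u : ℕ) = (g v : ℕ) := by
            have := congrArg Fin.val heq2
            simpa [hforced] using this
          exact hgp hadj (Fin.ext h5)
      refine ⟨hnot, ?_⟩
      rw [hτdef v]
      apply fresh_eq hnot
      intro b hb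
      apply Finset.mem_union_left
      rw [hbase2]
      simp only [if_pos hgvi, Finset.mem_filter]
      exact ⟨Finset.mem_univ b, hb⟩
  have hpin2 : ∀ v, (g v : ℕ) ≤ i → τ v = forced v :=
    fun v hv => (hFpin (ord2 v + 1) v (by omega) hv).2
  have hpin2nf : ∀ v, (g v : ℕ) ≤ i → τ v ∉ forb G hk0 base2 ord2 v := by
    intro v hv
    rw [(hFpin (ord2 v + 1) v (by omega) hv).2]
    exact (hFpin (ord2 v + 1) v (by omega) hv).1
  -- main strong induction for unpinned vertices
  have hMain : ∀ N v, ord2 v < N → i + 1 ≤ (g v : ℕ) →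
      ΓF ∉ forb G hk0 base2 ord2 v ∧ (τ v : ℕ) < Γ ∧
        ((c v : ℕ) ≠ i → (τ v : ℕ) ≤ (c v : ℕ)) := by
    intro N
    induction N with
    | zero => intro v hv; omega
    | succ N ih =>
      intro v hv hgvi
      have hgvi' : ¬((g v : ℕ) ≤ i) := by omega
      -- (a) : Γ is not forbidden
      have ha : ΓF ∉ forb G hk0 base2 ord2 v := by
        rw [mem_forb]
        rintro (hb | ⟨u, hadj, hlt, heq⟩)
        · rw [hbase2] at hb
          simp only [if_neg hgvi', Finset.mem_filter] at hb
          have : (ΓF : ℕ) = Γ := rfl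
          omega
        · have heq2 : τ u = ΓF := heq
          rcases le_or_gt (g u : ℕ) i with hgu | hgu
          · have hτu := hpin2 u hgu
            rw [hτu] at heq2
            have := congrArg Fin.val heq2
            simp only [hforced, hΓF] at this
            omega
          · have hτuΓ := (ih u (by omega) (by omega)).2.1
            rw [heq2] at hτuΓ
            simp only [hΓF] at hτuΓ
            omega
      have hsp := fresh_spec (hk0 := hk0) ha
      rw [← hτdef v] at hsp
      refine ⟨ha, ?_, ?_⟩
      · -- (d) : τ v < Γ via the grundy bound
        set W : Finset (Fin n) :=
          Finset.univ.filter (fun x => (g x : ℕ) ≤ i ∨ ord2 x ≤ ord2 v) with hW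
        have hnotforb : ∀ y ∈ W, τ y ∉ forb G hk0 base2 ord2 y := by
          intro y hy
          rcases (Finset.mem_filter.1 hy).2 with hgy | hordy
          · exact hpin2nf y hgy
          · rcases Nat.lt_or_ge (ord2 y) (ord2 v) with h3 | h3
            · rcases le_or_gt (g y : ℕ) i with h4 | h4
              · exact hpin2nf y h4
              · have := (ih y (by omega) (by omega)).1
                have hsp2 := fresh_spec (hk0 := hk0) this
                rw [← hτdef y] at hsp2
                exact hsp2.1
            · have h4 : y = v := lexOrd_inj key2 (show ord2 y = ord2 v by omega)
              subst h4
              exact hsp.1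
        have hWp : ∀ x ∈ W, ∀ y ∈ W, G.Adj x y → (τ x : ℕ) ≠ (τ y : ℕ) := by
          intro x hx y hy hadj heq
          have hne : ord2 x ≠ ord2 y := fun h3 => G.ne_of_adj hadj (lexOrd_inj _ h3)
          have heq' : τ x = τ y := Fin.ext heq
          rcases Nat.lt_or_ge (ord2 x) (ord2 y) with h3 | h3
          · apply hnotforb y hy
            rw [mem_forb]
            exact Or.inr ⟨x, hadj, h3, heq'⟩
          · apply hnotforb x hx
            rw [mem_forb]
            exact Or.inr ⟨y, hadj.symm, by omega, heq'.symm⟩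
        have hWw : ∀ x ∈ W, ∀ l : ℕ, l < (τ x : ℕ) → ∃ y ∈ W, G.Adj x y ∧ (τ y : ℕ) = l := by
          intro x hx l hl
          rcases (Finset.mem_filter.1 hx).2 with hgx | hordx
          · -- x pinned : witnesses from the domination property
            rw [hpin2 x hgx] at hl
            simp only [hforced] at hl
            obtain ⟨u, hadj, hu⟩ := hdom x l hl
            have hgu : (g u : ℕ) ≤ i := by omega
            refine ⟨u, Finset.mem_filter.2 ⟨Finset.mem_univ u, Or.inl hgu⟩, hadj, ?_⟩
            rw [hpin2 u hgu]
            simp only [hforced]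
            exact hu
          · -- x unpinned with ord2 x ≤ ord2 v
            rcases le_or_gt (g x : ℕ) i with hgx | hgx
            · rw [hpin2 x hgx] at hl
              simp only [hforced] at hl
              obtain ⟨u, hadj, hu⟩ := hdom x l hl
              have hgu : (g u : ℕ) ≤ i := by omega
              refine ⟨u, Finset.mem_filter.2 ⟨Finset.mem_univ u, Or.inl hgu⟩, hadj, ?_⟩
              rw [hpin2 u hgu]
              simp only [hforced]
              exact hu
            · rcases le_or_gt l i with hli | hli
              · obtain ⟨u, hadj, hu⟩ := hdom x l (by omega)
                have hgu : (g u : ℕ) ≤ i := by omega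
                refine ⟨u, Finset.mem_filter.2 ⟨Finset.mem_univ u, Or.inl hgu⟩, hadj, ?_⟩
                rw [hpin2 u hgu]
                simp only [hforced]
                exact hu
              · -- l ≥ i+1 : witnesses from minimality of the greedy choice
                have hmin : ∀ b, b < τ x → b ∈ forb G hk0 base2 ord2 x := by
                  rcases Nat.lt_or_ge (ord2 x) (ord2 v) with h3 | h3
                  · have := (ih x (by omega) (by omega)).1
                    have hsp2 := fresh_spec (hk0 := hk0) this
                    rw [← hτdef x] at hsp2
                    exact hsp2.2.2
                  · have h4 : x = v := lexOrd_inj key2 (show ord2 x = ord2 v by omega)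
                    subst h4
                    exact hsp.2.2
                have hlk : l < k := by
                  have := (τ x).isLt; omega
                have hb : (⟨l, hlk⟩ : Fin k) < τ x := by rw [Fin.lt_def]; exact hl
                have := hmin _ hb
                rw [mem_forb] at this
                rcases this with hbb | ⟨u, hadj, hltu, hequ⟩
                · rw [hbase2] at hbb
                  simp only [if_neg (by omega : ¬((g x : ℕ) ≤ i)), Finset.mem_filter] at hbb
                  omega
                · have hequ2 : τ u = ⟨l, hlk⟩ := hequ
                  refine ⟨u, Finset.mem_filter.2 ⟨Finset.mem_univ u, Or.inr (by omega)⟩,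
                    hadj.symm, ?_⟩
                  rw [hequ2]
        have := glb G W (fun x => (τ x : ℕ)) hWp hWw v
          (Finset.mem_filter.2 ⟨Finset.mem_univ v, Or.inr le_rfl⟩)
        exact this
      · -- (c) : if c v ≠ i then τ v ≤ c v
        intro hcv
        have hcvi : i + 1 ≤ (c v : ℕ) := by
          have := (hstab v (by omega)).1
          omega
        have hnf : c v ∉ forb G hk0 base2 ord2 v := by
          rw [mem_forb]
          rintro (hb | ⟨u, hadj, hlt, heq⟩)
          · rw [hbase2] at hb
            simp only [if_neg hgvi', Finset.mem_filter] at hb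
            omega
          · have heq2 : τ u = c v := heq
            rcases le_or_gt (g u : ℕ) i with hgu | hgu
            · rw [hpin2 u hgu] at heq2
              have := congrArg Fin.val heq2
              simp only [hforced] at this
              omega
            · -- u unpinned and earlier : key2 u ≤ key2 v, so c u < c v and τ u ≤ c u
              have hkle := lexOrd_lt_key (key := key2) hlt
              have hkv : key2 v = (c v : ℕ) + 1 := by
                simp [hkey2, hgvi', hcv]
              have hgu' : ¬((g u : ℕ) ≤ i) := by omega
              have hcu : (c u : ℕ) ≠ i := by
                intro h3
                have hku : key2 u = k + 1 := by
                  simp [hkey2, hgu', h3]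
                have := hcΓ v
                omega
              have hku : key2 u = (c u : ℕ) + 1 := by
                simp [hkey2, hgu', hcu]
              have hcucv : (c u : ℕ) < (c v : ℕ) := by
                rcases Nat.lt_or_ge (c u : ℕ) (c v : ℕ) with h3 | h3
                · exact h3
                · exfalso
                  have heq3 : (c u : ℕ) = (c v : ℕ) := by omega
                  exact hc hadj.symm (Fin.ext heq3.symm)
              have hτu := (ih u (by omega) (by omega)).2.2 hcu
              have heqv : (τ u : ℕ) = (c v : ℕ) := congrArg Fin.val heq2
              omega
        have hsp3 := fresh_spec (hk0 := hk0) hnf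
        rw [← hτdef v] at hsp3
        exact hsp3.2.1
  -- exports
  have hGv : ∀ v, i + 1 ≤ (g v : ℕ) → ΓF ∉ forb G hk0 base2 ord2 v :=
    fun v hv => (hMain (ord2 v + 1) v (by omega) hv).1
  have hτΓ : ∀ v, i + 1 ≤ (g v : ℕ) → (τ v : ℕ) < Γ :=
    fun v hv => (hMain (ord2 v + 1) v (by omega) hv).2.1
  have hτle : ∀ v, i + 1 ≤ (g v : ℕ) → (c v : ℕ) ≠ i → (τ v : ℕ) ≤ (c v : ℕ) :=
    fun v hv => (hMain (ord2 v + 1) v (by omega) hv).2.2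
  have hτnf : ∀ v, τ v ∉ forb G hk0 base2 ord2 v := by
    intro v
    rcases le_or_gt (g v : ℕ) i with hv | hv
    · exact hpin2nf v hv
    · have hsp := fresh_spec (hk0 := hk0) (hGv v hv)
      rw [← hτdef v] at hsp
      exact hsp.1
  have hτmin : ∀ v, i + 1 ≤ (g v : ℕ) → ∀ b, b < τ v → b ∈ forb G hk0 base2 ord2 v := by
    intro v hv
    have hsp := fresh_spec (hk0 := hk0) (hGv v hv)
    rw [← hτdef v] at hsp
    exact hsp.2.2
  have hτlow : ∀ v, i + 1 ≤ (g v : ℕ) → i + 1 ≤ (τ v : ℕ) := by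
    intro v hv
    by_contra h3
    apply hτnf v
    apply Finset.mem_union_left
    rw [hbase2]
    simp only [if_neg (by omega : ¬((g v : ℕ) ≤ i)), Finset.mem_filter]
    exact ⟨Finset.mem_univ _, by omega⟩
  have hτp : Proper G τ := by
    intro x y hadj heq
    have hne : ord2 x ≠ ord2 y := fun h3 => G.ne_of_adj hadj (lexOrd_inj _ h3)
    rcases Nat.lt_or_ge (ord2 x) (ord2 y) with h3 | h3
    · apply hτnf y
      rw [mem_forb]
      exact Or.inr ⟨x, hadj, h3, heq⟩
    · apply hτnf x
      rw [mem_forb]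
      exact Or.inr ⟨y, hadj.symm, by omega, heq.symm⟩
  -- the second pass condition
  have hreach2 : Reach G k ⟨ch, hchp⟩ ⟨τ, hτp⟩
      (Finset.univ.filter fun v => i ≤ (g v : ℕ)).card := by
    have h := realize (G := G) ord2
      (fun x y hadj heq => G.ne_of_adj hadj (lexOrd_inj _ heq))
      ch τ hchp hτp ?_
    · apply h.mono
      apply Finset.card_le_card
      intro v hv
      have hv2 := (Finset.mem_filter.1 hv).2
      refine Finset.mem_filter.2 ⟨Finset.mem_univ v, ?_⟩
      by_contra h3
      -- pinned vertices do not move in pass 2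
      have hgv : (g v : ℕ) < i := by omega
      have hnS : ¬inS v := by
        rw [hinS]
        push_neg
        intro h4
        omega
      apply hv2
      rw [hch_notS v hnS, hpin2 v (by omega)]
      apply Fin.ext
      simp only [hforced]
      exact hpin v hgv
    · -- τ x ≠ ch y for x earlier than y
      intro x y hadj hlt heq
      have hkle := lexOrd_lt_key (key := key2) hlt
      rcases le_or_gt (g x : ℕ) i with hgx | hgx
      · -- x pinned or in V_i : τ x = forced x has value g x ≤ i
        rw [hpin2 x hgx] at heq
        have heqv := congrArg Fin.val heq
        simp only [hforced] at heqv
        by_cases hyS : inS y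
        · rw [hch_inS y hyS] at heqv
          simp only [htopc] at heqv
          omega
        · rw [hch_notS y hyS] at heqv
          rcases Nat.lt_or_ge (g y : ℕ) i with hgy | hgy
          · -- y strictly pinned : value g y ≠ g x
            have := hpin y hgy
            have hne2 : g x ≠ g y := hgp hadj
            have : (g x : ℕ) ≠ (g y : ℕ) := fun h3 => hne2 (Fin.ext h3)
            omega
          · -- y in U_i : c y ≥ i
            have hcy := (hstab y hgy).1
            rcases Nat.lt_or_ge i (c y : ℕ) with h4 | h4
            · omega
            · -- c y = i exactly
              have hcyi : (c y : ℕ) = i := by omega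
              -- then y ∈ V_i (else y ∈ S), so g y = i, and g x = i forces adjacency contradiction
              have hgyi : (g y : ℕ) = i := by
                by_contra h5
                exact hyS ⟨by omega, hcyi⟩
              have hne2 : g x ≠ g y := hgp hadj
              have : (g x : ℕ) ≠ (g y : ℕ) := fun h3 => hne2 (Fin.ext h3)
              omega
      · -- x unpinned
        by_cases hxS : (c x : ℕ) = i
        · -- x ∈ S : its key is maximal, so y must also be in S, contradiction
          exfalso
          have hgx' : ¬((g x : ℕ) ≤ i) := by omega
          have hkx : key2 x = k + 1 := by
            simp [hkey2, hgx', hxS]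
          have hky : key2 y = k + 1 := by
            have h0 := hkey2_pinned y
            rcases le_or_gt (g y : ℕ) i with h5 | h5
            · have := hkey2_pinned y h5; omega
            · have hgy' : ¬((g y : ℕ) ≤ i) := by omega
              by_cases h6 : (c y : ℕ) = i
              · simp [hkey2, hgy', h6]
              · exfalso
                have : key2 y = (c y : ℕ) + 1 := by
                  simp [hkey2, hgy', h6]
                have := hcΓ y
                omega
          -- y in S as well
          have hyS : i + 1 ≤ (g y : ℕ) ∧ (c y : ℕ) = i := by
            rcases le_or_gt (g y : ℕ) i with h5 | h5
            · exfalso; have := hkey2_pinned y h5; omega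
            · have hgy' : ¬((g y : ℕ) ≤ i) := by omega
              constructor
              · omega
              · by_contra h6
                have : key2 y = (c y : ℕ) + 1 := by
                  simp [hkey2, hgy', h6]
                have := hcΓ y
                omega
          exact hc hadj (Fin.ext (by omega : (c x : ℕ) = (c y : ℕ)))
        · -- x a mover : τ x ≤ c x < anything later
          have hτx := hτle x (by omega) hxS
          have hτxΓ := hτΓ x (by omega)
          have heqv := congrArg Fin.val heq
          by_cases hyS : inS y
          · rw [hch_inS y hyS] at heqv
            simp only [htopc] at heqv
            omega
          · rw [hch_notS y hyS] at heqv
            have hgx' : ¬((g x : ℕ) ≤ i) := by omega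
            have hkx : key2 x = (c x : ℕ) + 1 := by
              simp [hkey2, hgx', hxS]
            rcases le_or_gt (g y : ℕ) i with h5 | h5
            · have := hkey2_pinned y h5; omega
            · by_cases h6 : (c y : ℕ) = i
              · exact hyS ⟨by omega, h6⟩
              · have hgy2 : ¬((g y : ℕ) ≤ i) := by omega
                have hky : key2 y = (c y : ℕ) + 1 := by
                  simp [hkey2, hgy2, h6]
                have hcxcy : (c x : ℕ) < (c y : ℕ) ∨ (c x : ℕ) = (c y : ℕ) := by omega
                rcases hcxcy with h7 | h7
                · omega
                · exact hc hadj (Fin.ext h7)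
  -- =============== the new invariant =================
  have hpin' : Pin g (i + 1) τ := by
    intro v hv
    rw [hpin2 v (by omega)]
  have hstab' : Stab G g (i + 1) τ := by
    intro v hv
    refine ⟨hτlow v hv, ?_⟩
    intro l hl1 hl2
    have hlk : l < k := by have := (τ v).isLt; omega
    have hb : (⟨l, hlk⟩ : Fin k) < τ v := by rw [Fin.lt_def]; exact hl2
    have := hτmin v hv _ hb
    rw [mem_forb] at this
    rcases this with hbb | ⟨u, hadj, hltu, hequ⟩
    · rw [hbase2] at hbb
      simp only [if_neg (by omega : ¬((g v : ℕ) ≤ i)), Finset.mem_filter] at hbb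
      omega
    · have hequ2 : τ u = ⟨l, hlk⟩ := hequ
      exact ⟨u, hadj.symm, by rw [hequ2]⟩
  refine ⟨τ, hτp, hpin', hstab', ?_⟩
  exact hreach1.trans hreach2
end GM5
namespace GM6
open SimpleGraph Finset GM GM2 GM3 GM4 GM5

variable {n k t : ℕ} {G : SimpleGraph (Fin n)} {g : Fin n → Fin t} [DecidableRel G.Adj]

lemma phases
    (hgp : ∀ ⦃x y⦄, G.Adj x y → g x ≠ g y)
    (hdom : ∀ v, ∀ l : ℕ, l < (g v : ℕ) → ∃ u, G.Adj v u ∧ (g u : ℕ) = l)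
    (htΓ : t ≤ grundyNum G) (hΓk : grundyNum G + 1 ≤ k)
    (γ : Fin n → Fin k) (hγval : ∀ v, (γ v : ℕ) = (g v : ℕ)) (hγp : Proper G γ) :
    ∀ (d i : ℕ), i + d = t → ∀ (c : Fin n → Fin k) (hc : Proper G c),
      Pin g i c → Stab G g i c →
      Reach G k ⟨c, hc⟩ ⟨γ, hγp⟩
        (∑ j ∈ Finset.Ico i t,
          ((Finset.univ.filter fun v => j + 1 ≤ (g v : ℕ)).card +
           (Finset.univ.filter fun v => j ≤ (g v : ℕ)).card)) := by
  intro d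
  induction d with
  | zero =>
    intro i hit c hc hpin _
    have hceq : c = γ := by
      funext v
      apply Fin.ext
      have h1 : (g v : ℕ) < t := (g v).isLt
      have h2 := hpin v (by omega)
      rw [h2, hγval v]
    subst hceq
    rw [show i = t by omega, Finset.Ico_self, Finset.sum_empty]
    exact Reach.refl _ _
  | succ d ih =>
    intro i hit c hc hpin hstab
    have hi : i < t := by omega
    obtain ⟨c', hc', hpin', hstab', hreach⟩ :=
      phase_step hgp hdom htΓ hΓk i hi c hc hpin hstab
    have hrest := ih (i + 1) (by omega) c' hc' hpin' hstab'
    have htot := hreach.trans hrest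
    rw [Finset.sum_eq_sum_Ico_succ_bot hi]
    exact htot

lemma sum_arith (hgt : ∀ v : Fin n, (g v : ℕ) + 1 ≤ t) :
    n + (∑ j ∈ Finset.Ico 0 t,
          ((Finset.univ.filter fun v => j + 1 ≤ (g v : ℕ)).card +
           (Finset.univ.filter fun v => j ≤ (g v : ℕ)).card)) ≤ 2 * t * n := by
  classical
  have key : ∀ (P : ℕ → Fin n → Prop) [∀ j v, Decidable (P j v)],
      (∑ j ∈ Finset.Ico 0 t, (Finset.univ.filter fun v => P j v).card)
        = ∑ v : Fin n, (Finset.Ico 0 t |>.filter fun j => P j v).card := by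
    intro P _
    simp only [Finset.card_filter]
    rw [Finset.sum_comm]
  have h1 : (∑ j ∈ Finset.Ico 0 t, (Finset.univ.filter fun v => j ≤ (g v : ℕ)).card)
      = ∑ v : Fin n, ((g v : ℕ) + 1) := by
    rw [key (fun j v => j ≤ (g v : ℕ))]
    apply Finset.sum_congr rfl
    intro v _
    have : (Finset.Ico 0 t |>.filter fun j => j ≤ (g v : ℕ)) = Finset.Ico 0 ((g v : ℕ) + 1) := by
      ext j
      simp only [Finset.mem_filter, Finset.mem_Ico]
      have := hgt v
      omega
    rw [this, Nat.card_Ico]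
    omega
  have h2 : (∑ j ∈ Finset.Ico 0 t, (Finset.univ.filter fun v => j + 1 ≤ (g v : ℕ)).card)
      = ∑ v : Fin n, (g v : ℕ) := by
    rw [key (fun j v => j + 1 ≤ (g v : ℕ))]
    apply Finset.sum_congr rfl
    intro v _
    have : (Finset.Ico 0 t |>.filter fun j => j + 1 ≤ (g v : ℕ))
        = Finset.Ico 0 (g v : ℕ) := by
      ext j
      simp only [Finset.mem_filter, Finset.mem_Ico]
      have := hgt v
      omega
    rw [this, Nat.card_Ico]
    omega
  have h3 : (∑ v : Fin n, (g v : ℕ)) ≤ n * (t - 1) := by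
    calc (∑ v : Fin n, (g v : ℕ)) ≤ ∑ _v : Fin n, (t - 1) := by
          apply Finset.sum_le_sum
          intro v _
          have := hgt v
          omega
      _ = n * (t - 1) := by
          rw [Finset.sum_const, Finset.card_univ, Fintype.card_fin, smul_eq_mul]
  rw [Finset.sum_add_distrib, h1, h2]
  have h4 : (∑ v : Fin n, ((g v : ℕ) + 1)) = (∑ v : Fin n, (g v : ℕ)) + n := by
    rw [Finset.sum_add_distrib, Finset.sum_const, Finset.card_univ, Fintype.card_fin,
      smul_eq_mul, mul_one]
  rw [h4]
  rcases Nat.eq_zero_or_pos n with hn | hn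
  · subst hn
    have h5 : (∑ v : Fin 0, (g v : ℕ)) = 0 := by simp
    omega
  · have ht : 1 ≤ t := by
      have := hgt ⟨0, hn⟩
      omega
    have h6 : n * (t - 1) + n = n * t := by
      cases t with
      | zero => omega
      | succ t' => simp [Nat.mul_succ]
    have h7 : 2 * t * n = 2 * (n * t) := by ring
    omega

end GM6
namespace GM7
open SimpleGraph Finset GM GM2 GM3 GM4 GM5 GM6

/-- One side of the diameter bound : any proper coloring reaches the canonical coloring. -/
lemma side_reach {n k t : ℕ} {G : SimpleGraph (Fin n)} [DecidableRel G.Adj]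
    {g : Fin n → Fin t}
    (hgp : ∀ ⦃x y⦄, G.Adj x y → g x ≠ g y)
    (hdom : ∀ v, ∀ l : ℕ, l < (g v : ℕ) → ∃ u, G.Adj v u ∧ (g u : ℕ) = l)
    (htΓ : t ≤ grundyNum G) (hΓk : grundyNum G + 1 ≤ k)
    (γ : Fin n → Fin k) (hγval : ∀ v, (γ v : ℕ) = (g v : ℕ)) (hγp : Proper G γ)
    (α : Fin n → Fin k) (hα : Proper G α) :
    Reach G k ⟨α, hα⟩ ⟨γ, hγp⟩ (2 * t * n) := by
  have hk0 : 0 < k := by omega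
  -- preprocessing pass
  have h1 : Reach G k ⟨α, hα⟩ ⟨tauPre G hk0 α, tauPre_proper hα⟩ n := tauPre_reach hα
  -- phases
  have hpin0 : Pin g 0 (tauPre G hk0 α) := fun v hv => by omega
  have hstab0 : Stab G g 0 (tauPre G hk0 α) := by
    intro v _
    refine ⟨Nat.zero_le _, ?_⟩
    intro l _ hl
    exact tauPre_grundy hα v l hl
  have h2 := phases hgp hdom htΓ hΓk γ hγval hγp t 0 (by omega)
    (tauPre G hk0 α) (tauPre_proper hα) hpin0 hstab0
  have h3 := h1.trans h2
  apply h3.mono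
  exact sum_arith (fun v => (g v).isLt)

end GM7

-- **Statement 0.** If `k ≥ χ_g(G) + 1` then `G` is `k`-mixing and the diameter of
-- the `k`-recoloring graph is at most `4·χ(G)·n`.
open SimpleGraph Finset GM GM2 GM3 GM4 GM5 GM6 GM7 in
/-- If `k ≥ χ_g(G) + 1` then `G` is `k`-mixing and the diameter of
the `k`-recoloring graph is at most `4·χ(G)·n`. -/
theorem grundy_mixing (n k : ℕ) (G : SimpleGraph (Fin n))
    (hk : grundyNum G + 1 ≤ k) :
    (recolorGraph G k).Connected ∧
      ∀ α β : {c : Fin n → Fin k // Proper G c},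
        ((recolorGraph G k).dist α β : ℕ∞) ≤ 4 * G.chromaticNumber * n := by
  classical
  haveI : DecidableRel G.Adj := Classical.decRel _
  rcases Nat.eq_zero_or_pos n with hn | hn
  · -- trivial case : no vertices
    subst hn
    have hsub : ∀ a b : {c : Fin 0 → Fin k // Proper G c}, a = b := by
      intro a b
      apply Subtype.ext
      funext v
      exact v.elim0
    constructor
    · rw [SimpleGraph.connected_iff]
      refine ⟨?_, ⟨⟨fun v => v.elim0, fun x _ _ => x.elim0⟩⟩⟩
      intro a b
      rw [hsub a b]
    · intro α β
      rw [hsub α β, SimpleGraph.dist_self]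
      simp
  · -- a grundy coloring of G
    obtain ⟨C₀, hC₀, -⟩ := ext_lemma G (Finset.univ \ ∅).card ∅ (fun _ => 0) le_rfl
      (by simp) (by simp)
    set m₀ := (Finset.univ.image C₀).card with hm₀
    have hm₀Γ : m₀ ≤ grundyNum G := le_csSup (grundy_bddAbove G) ⟨C₀, hC₀, rfl⟩
    have hcol : G.Colorable m₀ := by
      rw [SimpleGraph.colorable_iff_exists_bdd_nat_coloring]
      exact ⟨SimpleGraph.Coloring.mk C₀ (fun {a b} h => hC₀.1 h),
        fun v => isGrundy_lt_card_image G hC₀ v⟩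
    have hne_top : G.chromaticNumber ≠ ⊤ :=
      SimpleGraph.chromaticNumber_ne_top_iff_exists.2 ⟨m₀, hcol⟩
    set t : ℕ := (G.chromaticNumber).toNat with htdef
    have hcast : (t : ℕ∞) = G.chromaticNumber := ENat.coe_toNat hne_top
    have hcolt : G.Colorable t := SimpleGraph.colorable_chromaticNumber hcol
    have htm₀ : t ≤ m₀ := by
      have := hcol.chromaticNumber_le
      rw [← hcast] at this
      exact_mod_cast this
    have htΓ : t ≤ grundyNum G := le_trans htm₀ hm₀Γ
    -- a minimal proper coloring with t colors
    obtain ⟨C⟩ := hcolt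
    set A : Finset (Fin n → Fin t) :=
      Finset.univ.filter (fun f => ∀ ⦃x y⦄, G.Adj x y → f x ≠ f y) with hA
    have hAne : A.Nonempty := by
      refine ⟨fun v => C v, ?_⟩
      rw [hA, Finset.mem_filter]
      exact ⟨Finset.mem_univ _, fun x y h => C.valid h⟩
    obtain ⟨g, hgA, hgmin⟩ := Finset.exists_min_image A (fun f => ∑ v, (f v : ℕ)) hAne
    have hgp : ∀ ⦃x y⦄, G.Adj x y → g x ≠ g y := by
      have := (Finset.mem_filter.1 (by rwa [hA] at hgA)).2
      exact this
    have hdom : ∀ v, ∀ l : ℕ, l < (g v : ℕ) → ∃ u, G.Adj v u ∧ (g u : ℕ) = l := by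
      intro v l hl
      by_contra hno
      push_neg at hno
      have hlt : l < t := lt_trans hl (g v).isLt
      set g' : Fin n → Fin t := Function.update g v ⟨l, hlt⟩ with hg'
      have hg'v : g' v = ⟨l, hlt⟩ := by simp [hg']
      have hg'ne : ∀ w, w ≠ v → g' w = g w := fun w hw => Function.update_of_ne hw _ _
      have hg'p : ∀ ⦃x y⦄, G.Adj x y → g' x ≠ g' y := by
        intro x y hadj heq
        rcases eq_or_ne x v with rfl | hx
        · rw [hg'v, hg'ne y (G.ne_of_adj hadj).symm] at heq
          have : (g y : ℕ) = l := by
            have := congrArg Fin.val heq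
            simpa using this.symm
          exact hno y hadj this
        · rcases eq_or_ne y v with rfl | hy
          · rw [hg'v, hg'ne x hx] at heq
            have : (g x : ℕ) = l := by
              have := congrArg Fin.val heq
              simpa using this
            exact hno x hadj.symm this
          · rw [hg'ne x hx, hg'ne y hy] at heq
            exact hgp hadj heq
      have hg'A : g' ∈ A := by
        rw [hA, Finset.mem_filter]
        exact ⟨Finset.mem_univ _, hg'p⟩
      have hmin : (∑ u, (g u : ℕ)) ≤ ∑ u, (g' u : ℕ) := hgmin g' hg'A
      have hsum1 : (∑ u, (g u : ℕ)) = (g v : ℕ) + ∑ u ∈ Finset.univ.erase v, (g u : ℕ) :=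
        (Finset.add_sum_erase _ _ (Finset.mem_univ v)).symm
      have hsum2 : (∑ u, (g' u : ℕ)) = (g' v : ℕ) + ∑ u ∈ Finset.univ.erase v, (g' u : ℕ) :=
        (Finset.add_sum_erase _ _ (Finset.mem_univ v)).symm
      have hsum3 : (∑ u ∈ Finset.univ.erase v, (g' u : ℕ))
          = ∑ u ∈ Finset.univ.erase v, (g u : ℕ) := by
        apply Finset.sum_congr rfl
        intro u hu
        rw [hg'ne u (Finset.ne_of_mem_erase hu)]
      have hg'vval : (g' v : ℕ) = l := by rw [hg'v]
      omega
    -- the canonical coloring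
    have hγlt : ∀ v, (g v : ℕ) < k := by
      intro v
      have := (g v).isLt
      omega
    set γ : Fin n → Fin k := fun v => ⟨(g v : ℕ), hγlt v⟩ with hγ
    have hγval : ∀ v, (γ v : ℕ) = (g v : ℕ) := fun v => rfl
    have hγp : Proper G γ := by
      intro x y hadj heq
      apply hgp hadj
      apply Fin.ext
      have := congrArg Fin.val heq
      simpa [hγ] using this
    -- both sides reach γ
    have hside : ∀ (α : Fin n → Fin k) (hα : Proper G α),
        Reach G k ⟨α, hα⟩ ⟨γ, hγp⟩ (2 * t * n) :=
      fun α hα => side_reach hgp hdom htΓ hk γ hγval hγp α hα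
    constructor
    · rw [SimpleGraph.connected_iff]
      refine ⟨?_, ⟨⟨γ, hγp⟩⟩⟩
      intro a b
      obtain ⟨w1, -⟩ := hside a.1 a.2
      obtain ⟨w2, -⟩ := hside b.1 b.2
      exact SimpleGraph.Walk.reachable (w1.append w2.reverse)
    · intro α β
      obtain ⟨w1, hw1⟩ := hside α.1 α.2
      obtain ⟨w2, hw2⟩ := hside β.1 β.2
      have hdist : (recolorGraph G k).dist α β ≤ 4 * t * n := by
        have h : (recolorGraph G k).dist ⟨α.1, α.2⟩ ⟨β.1, β.2⟩ ≤ (w1.append w2.reverse).length :=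
          SimpleGraph.dist_le _
        rw [SimpleGraph.Walk.length_append, SimpleGraph.Walk.length_reverse] at h
        have h2 : (recolorGraph G k).dist α β ≤ w1.length + w2.length := h
        have h3 : 4 * t * n = 2 * t * n + 2 * t * n := by ring
        omega
      calc ((recolorGraph G k).dist α β : ℕ∞) ≤ ((4 * t * n : ℕ) : ℕ∞) := by
            exact_mod_cast hdist
        _ = 4 * (t : ℕ∞) * (n : ℕ∞) := by push_cast; ring
        _ ≤ 4 * G.chromaticNumber * (n : ℕ∞) := by
            apply mul_le_mul_left
            apply mul_le_mul_right
            exact le_of_eq hcast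
end

section
/- For any integer k ≥ n+1, any proper k-coloring of the complete graph K_n can be transformed into any other proper k-coloring of K_n by a sequence of single-vertex recolorings, through proper colorings only, in which every vertex is recolored at most twice. -/
open SimpleGraph

lemma recolor_mono {V : Type} (G : SimpleGraph V) {k : ℕ} (α β : V → Fin k)
    {b b' : V → ℕ} (h : RecolorSeqLe G α β b) (hb : ∀ v, b v ≤ b' v) :
    RecolorSeqLe G α β b' := by
  obtain ⟨m, c, h1, h2, h3, h4, h5⟩ := h
  exact ⟨m, c, h1, h2, h3, h4, fun v => (h5 v).trans (hb v)⟩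

lemma recolor_prepend {V : Type} (G : SimpleGraph V) {k : ℕ} (c0 c1 β : V → Fin k)
    (b : V → ℕ) (h0 : Proper G c0) (hstep : ∃! v, c0 v ≠ c1 v)
    (h : RecolorSeqLe G c1 β b) :
    RecolorSeqLe G c0 β (fun v => b v + if c0 v = c1 v then 0 else 1) := by
  classical
  obtain ⟨m, c, hc0, hcm, hprop, hst, hcnt⟩ := h
  refine ⟨m + 1, fun i => if i = 0 then c0 else c (i - 1), by simp, by simp [hcm], ?_, ?_, ?_⟩
  · intro i hi
    rcases Nat.eq_zero_or_pos i with rfl | hpos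
    · simpa using h0
    · have h1 : i - 1 ≤ m := by omega
      simpa [Nat.pos_iff_ne_zero.mp hpos] using hprop _ h1
  · intro i hi
    rcases Nat.eq_zero_or_pos i with rfl | hpos
    · simpa [hc0] using hstep
    · have h1 : i - 1 < m := by omega
      have := hst _ h1
      simp only [Nat.pos_iff_ne_zero.mp hpos, if_neg, Nat.add_sub_cancel, Nat.succ_ne_zero,
        ite_false]
      simpa [show i - 1 + 1 = i from by omega] using this
  · intro v
    rw [Finset.card_filter, Finset.sum_range_succ']
    simp only [Nat.add_sub_cancel, Nat.succ_ne_zero, ite_false, if_neg, Nat.zero_sub]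
    rw [← Finset.card_filter]
    have := hcnt v
    simp only [hc0]
    split_ifs with h1 h2 <;> omega

lemma proper_top_iff {n k : ℕ} (c : Fin n → Fin k) :
    Proper (⊤ : SimpleGraph (Fin n)) c ↔ Function.Injective c := by
  constructor
  · intro h x y hxy
    by_contra hne
    exact h (by simp [hne] : (⊤ : SimpleGraph (Fin n)).Adj x y) hxy
  · intro h x y hxy hc
    exact (by simpa using hxy : x ≠ y) (h hc)

lemma update_step {n k : ℕ} (c : Fin n → Fin k) (v : Fin n) (a : Fin k) (ha : c v ≠ a) :
    ∃! x, c x ≠ Function.update c v a x := by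
  refine ⟨v, by simpa using ha, fun x hx => ?_⟩
  by_contra hne
  exact hx (by simp [Function.update_of_ne hne])

lemma update_inj {A B : Type*} [DecidableEq A] {c : A → B} (hc : Function.Injective c)
    (v : A) (a : B) (ha : ∀ x, c x ≠ a) : Function.Injective (Function.update c v a) := by
  intro x y hxy
  simp only [Function.update_apply] at hxy
  split_ifs at hxy with h1 h2 h2
  · exact h1.trans h2.symm
  · exact absurd hxy.symm (ha y)
  · exact absurd hxy (ha x)
  · exact hc hxy

lemma key {n k : ℕ} (hk : n + 1 ≤ k) (β : Fin n → Fin k) (hβ : Function.Injective β) :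
    ∀ d (c : Fin n → Fin k), Function.Injective c →
      (Finset.univ.filter fun v => c v ≠ β v).card ≤ d →
      RecolorSeqLe (⊤ : SimpleGraph (Fin n)) c β
        (fun v => (if c v = β v then 0 else 1) +
          (if ∃ w, c w ≠ β w ∧ w ≠ v ∧ c v = β w then 1 else 0)) := by
  classical
  intro d
  induction d with
  | zero =>
      intro c hc hcard
      have hcb : c = β := by
        funext v
        by_contra hne
        have hv : v ∈ Finset.univ.filter fun v => c v ≠ β v := by simp [hne]
        have := Finset.card_pos.mpr ⟨v, hv⟩
        omega
      subst hcb
      exact ⟨0, fun _ => c, rfl, rfl, fun i _ => (proper_top_iff c).mpr hc,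
        fun i hi => absurd hi (by omega), fun v => by simp⟩
  | succ d ih =>
      intro c hc hcard
      by_cases hD : (Finset.univ.filter fun v => c v ≠ β v) = ∅
      · have hcb : c = β := by
          funext v
          by_contra hne
          have hv : v ∈ Finset.univ.filter fun v => c v ≠ β v := by simp [hne]
          simp [hD] at hv
        subst hcb
        exact ⟨0, fun _ => c, rfl, rfl, fun i _ => (proper_top_iff c).mpr hc,
          fun i hi => absurd hi (by omega), fun v => by simp⟩
      by_cases hA : ∃ u, c u ≠ β u ∧ ∀ x, c x ≠ β u
      · -- Branch A : direct move of u to its target color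
        obtain ⟨u, hu, hfree⟩ := hA
        have hc'inj : Function.Injective (Function.update c u (β u)) :=
          update_inj hc u (β u) hfree
        have hc'u : Function.update c u (β u) u = β u := Function.update_self _ _ _
        have hc'o : ∀ x, x ≠ u → Function.update c u (β u) x = c x :=
          fun x hx => Function.update_of_ne hx _ _
        have hsub : (Finset.univ.filter fun v => Function.update c u (β u) v ≠ β v) ⊆
            (Finset.univ.filter fun v => c v ≠ β v).erase u := by
          intro x hx
          simp only [Finset.mem_filter, Finset.mem_univ, true_and] at hx
          have hxu : x ≠ u := by rintro rfl; exact hx hc'u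
          rw [hc'o x hxu] at hx
          simp [hxu, hx]
        have hcard' : (Finset.univ.filter fun v => Function.update c u (β u) v ≠ β v).card
            ≤ d := by
          have h1 := Finset.card_le_card hsub
          have h2 : u ∈ Finset.univ.filter fun v => c v ≠ β v := by simp [hu]
          rw [Finset.card_erase_of_mem h2] at h1
          omega
        have htail := ih _ hc'inj hcard'
        have hstep : ∃! x, c x ≠ Function.update c u (β u) x := update_step c u (β u) hu
        have hfull := recolor_prepend _ c _ β _ ((proper_top_iff c).mpr hc) hstep htail
        refine recolor_mono _ _ _ hfull ?_
        intro v
        rcases eq_or_ne v u with rfl | hvu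
        · have e2 : ¬ (c v = Function.update c v (β v) v) := by rw [hc'u]; exact hu
          have e3 : ¬ ∃ w, Function.update c v (β v) w ≠ β w ∧ w ≠ v ∧
              Function.update c v (β v) v = β w := by
            rintro ⟨w, hw1, hw2, hw3⟩
            rw [hc'u] at hw3
            exact hw2 (hβ hw3.symm)
          simp only [if_pos hc'u, if_neg e3, if_neg e2, if_neg hu]
          split_ifs <;> omega
        · have e0 : Function.update c u (β u) v = c v := hc'o v hvu
          have himp : (∃ w, Function.update c u (β u) w ≠ β w ∧ w ≠ v ∧ c v = β w) →
              (∃ w, c w ≠ β w ∧ w ≠ v ∧ c v = β w) := by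
            rintro ⟨w, hw1, hw2, hw3⟩
            have hwu : w ≠ u := by rintro rfl; exact hw1 hc'u
            rw [hc'o w hwu] at hw1
            exact ⟨w, hw1, hw2, hw3⟩
          simp only [e0, if_pos rfl]
          rcases Classical.em (∃ w, Function.update c u (β u) w ≠ β w ∧ w ≠ v ∧ c v = β w)
            with hP | hP
          · have hQ := himp hP
            simp only [if_pos hP, if_pos hQ]
            split_ifs <;> omega
          · simp only [if_neg hP]
            split_ifs <;> omega
      · -- Branch B : cycle breaking
        push_neg at hA
        obtain ⟨w, hwmem⟩ := Finset.nonempty_iff_ne_empty.mpr hD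
        simp only [Finset.mem_filter, Finset.mem_univ, true_and] at hwmem
        have hw : c w ≠ β w := hwmem
        obtain ⟨v, hv⟩ := hA w hw
        have hvw : v ≠ w := by rintro rfl; exact hw hv
        have hvD : c v ≠ β v := fun h => hvw (hβ (h ▸ hv))
        obtain ⟨s, hs⟩ : ∃ s : Fin k, ∀ x, c x ≠ s := by
          by_contra h
          push_neg at h
          have := Fintype.card_le_of_surjective c (fun s => h s)
          simp only [Fintype.card_fin] at this
          omega
        have hc₁inj : Function.Injective (Function.update c v s) := update_inj hc v s hs
        have hc₁v : Function.update c v s v = s := Function.update_self _ _ _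
        have hc₁o : ∀ x, x ≠ v → Function.update c v s x = c x :=
          fun x hx => Function.update_of_ne hx _ _
        have hβw_free : ∀ x, Function.update c v s x ≠ β w := by
          intro x
          rcases eq_or_ne x v with rfl | hx
          · rw [hc₁v]
            intro h
            exact hs x (hv.trans h.symm)
          · rw [hc₁o x hx]
            intro h
            exact hx (hc (h.trans hv.symm))
        have hc₂inj : Function.Injective
            (Function.update (Function.update c v s) w (β w)) :=
          update_inj hc₁inj w (β w) hβw_free
        have hc₂w : Function.update (Function.update c v s) w (β w) w = β w :=
          Function.update_self _ _ _
        have hc₂v : Function.update (Function.update c v s) w (β w) v = s := by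
          rw [Function.update_of_ne hvw, hc₁v]
        have hc₂o : ∀ x, x ≠ v → x ≠ w →
            Function.update (Function.update c v s) w (β w) x = c x := by
          intro x hx1 hx2
          rw [Function.update_of_ne hx2, hc₁o x hx1]
        have hsvβ : s ≠ β v := by
          intro h
          obtain ⟨x, hx⟩ := hA v hvD
          exact hs x (hx.trans h.symm)
        have hsub : (Finset.univ.filter fun x =>
              Function.update (Function.update c v s) w (β w) x ≠ β x) ⊆
            (Finset.univ.filter fun x => c x ≠ β x).erase w := by
          intro x hx
          simp only [Finset.mem_filter, Finset.mem_univ, true_and] at hx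
          have hxw : x ≠ w := by rintro rfl; exact hx hc₂w
          rcases eq_or_ne x v with rfl | hxv
          · simp [hvw, hvD]
          · rw [hc₂o x hxv hxw] at hx
            simp [hxw, hx]
        have hcard' : (Finset.univ.filter fun x =>
            Function.update (Function.update c v s) w (β w) x ≠ β x).card ≤ d := by
          have h1 := Finset.card_le_card hsub
          have h2 : w ∈ Finset.univ.filter fun x => c x ≠ β x := by simp [hw]
          rw [Finset.card_erase_of_mem h2] at h1
          omega
        have htail := ih _ hc₂inj hcard'
        have hstep2 : ∃! x, Function.update c v s x ≠
            Function.update (Function.update c v s) w (β w) x := by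
          refine update_step _ w (β w) ?_
          rw [hc₁o w (Ne.symm hvw)]
          exact hw
        have hstep1 : ∃! x, c x ≠ Function.update c v s x := update_step c v s (hs v)
        have hmid := recolor_prepend _ _ _ β _ ((proper_top_iff _).mpr hc₁inj) hstep2 htail
        have hfull := recolor_prepend _ _ _ β _ ((proper_top_iff c).mpr hc) hstep1 hmid
        refine recolor_mono _ _ _ hfull ?_
        intro x
        rcases eq_or_ne x v with rfl | hxv
        · -- x = v
          have e1 : ¬ (Function.update (Function.update c x s) w (β w) x = β x) := by
            rw [hc₂v]; exact hsvβ
          have e2 : ¬ ∃ u, Function.update (Function.update c x s) w (β w) u ≠ β u ∧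
              u ≠ x ∧ Function.update (Function.update c x s) w (β w) x = β u := by
            rintro ⟨u, hu1, hu2, hu3⟩
            rw [hc₂v] at hu3
            have huw : u ≠ w := by rintro rfl; exact hu1 hc₂w
            rw [hc₂o u hu2 huw] at hu1
            obtain ⟨y, hy⟩ := hA u hu1
            exact hs y (hy.trans hu3.symm)
          have e3 : Function.update c x s x =
              Function.update (Function.update c x s) w (β w) x := by
            rw [Function.update_of_ne hvw]
          have e4 : ¬ (c x = Function.update c x s x) := by rw [hc₁v]; exact hs x
          have e5 : ∃ u, c u ≠ β u ∧ u ≠ x ∧ c x = β u := ⟨w, hw, Ne.symm hvw, hv⟩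
          simp only [if_neg e1, if_neg e2, if_pos e3, if_neg e4, if_neg hvD, if_pos e5]
          omega
        · rcases eq_or_ne x w with rfl | hxw
          · -- x = w
            have e2 : ¬ ∃ u, Function.update (Function.update c v s) x (β x) u ≠ β u ∧
                u ≠ x ∧ Function.update (Function.update c v s) x (β x) x = β u := by
              rintro ⟨u, hu1, hu2, hu3⟩
              rw [hc₂w] at hu3
              exact hu2 (hβ hu3.symm)
            have e3 : ¬ (Function.update c v s x =
                Function.update (Function.update c v s) x (β x) x) := by
              rw [hc₂w, hc₁o x (Ne.symm hvw)]; exact hw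
            have e4 : c x = Function.update c v s x := (hc₁o x (Ne.symm hvw)).symm
            simp only [if_pos hc₂w, if_neg e2, if_neg e3, if_pos e4, if_neg hw]
            split_ifs <;> omega
          · -- other vertices
            have e0 : Function.update (Function.update c v s) w (β w) x = c x :=
              hc₂o x hxv hxw
            have e1 : Function.update c v s x =
                Function.update (Function.update c v s) w (β w) x := by
              rw [e0, hc₁o x hxv]
            have e2 : c x = Function.update c v s x := by rw [hc₁o x hxv]
            have himp : (∃ u, Function.update (Function.update c v s) w (β w) u ≠ β u ∧
                u ≠ x ∧ c x = β u) → (∃ u, c u ≠ β u ∧ u ≠ x ∧ c x = β u) := by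
              rintro ⟨u, hu1, hu2, hu3⟩
              rcases eq_or_ne u v with rfl | huv
              · exact ⟨u, hvD, hu2, hu3⟩
              · have huw : u ≠ w := by rintro rfl; exact hu1 hc₂w
                rw [hc₂o u huv huw] at hu1
                exact ⟨u, hu1, hu2, hu3⟩
            simp only [e0, if_pos e1, if_pos e2]
            rcases Classical.em (∃ u, Function.update (Function.update c v s) w (β w) u ≠ β u ∧
                u ≠ x ∧ c x = β u) with hP | hP
            · have hQ := himp hP
              simp only [if_pos hP, if_pos hQ]
              split_ifs <;> omega
            · simp only [if_neg hP]
              split_ifs <;> omega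

/-- For `k ≥ n + 1`, any proper `k`-coloring of the complete graph
`K_n` can be transformed into any other through proper colorings, recoloring every
vertex at most twice. -/
theorem clique_recoloring (n k : ℕ) (hk : n + 1 ≤ k)
    (α β : Fin n → Fin k)
    (hα : Proper (⊤ : SimpleGraph (Fin n)) α)
    (hβ : Proper (⊤ : SimpleGraph (Fin n)) β) :
    RecolorSeqLe (⊤ : SimpleGraph (Fin n)) α β (fun _ => 2) := by
  classical
  have h := key hk β ((proper_top_iff β).mp hβ)
    (Finset.univ.filter fun v => α v ≠ β v).card α ((proper_top_iff α).mp hα) le_rfl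
  refine recolor_mono _ _ _ h ?_
  intro v
  split_ifs <;> omega
end

section
/- Let G be a graph on n vertices and let k, ℓ be integers with k ≥ χ_g(G)+1 > ℓ. Then for any proper k-coloring α of G and any greedy (grundy) coloring β of G that uses exactly ℓ colors, the distance between α and β in the k-recoloring graph R_k(G) is at most (2ℓ−1)·n. -/
open SimpleGraph

/-- A grundy coloring (with values in `Fin k`) is in particular proper. -/
theorem IsGrundy.proper {V : Type} {G : SimpleGraph V} {k : ℕ} {β : V → Fin k}
    (hβ : IsGrundy G (fun v => (β v : ℕ))) : Proper G β :=
  fun _ _ hxy h => hβ.1 hxy (congrArg Fin.val h)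

section Machinery

variable {n k : ℕ} {G : SimpleGraph (Fin n)}

/-- Connectivity-with-bound in the recoloring graph. -/
def Conn (G : SimpleGraph (Fin n)) (k : ℕ) (x y : {c : Fin n → Fin k // Proper G c})
    (m : ℕ) : Prop :=
  ∃ w : (recolorGraph G k).Walk x y, w.length ≤ m

lemma Conn.refl (x : {c : Fin n → Fin k // Proper G c}) (m : ℕ) : Conn G k x x m :=
  ⟨.nil, by simp⟩

lemma Conn.trans {x y z : {c : Fin n → Fin k // Proper G c}} {a b : ℕ}
    (h1 : Conn G k x y a) (h2 : Conn G k y z b) : Conn G k x z (a + b) := by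
  obtain ⟨w1, h1⟩ := h1
  obtain ⟨w2, h2⟩ := h2
  exact ⟨w1.append w2, by rw [SimpleGraph.Walk.length_append]; omega⟩

lemma Conn.mono {x y : {c : Fin n → Fin k // Proper G c}} {a b : ℕ}
    (h : Conn G k x y a) (hab : a ≤ b) : Conn G k x y b := by
  obtain ⟨w, hw⟩ := h
  exact ⟨w, hw.trans hab⟩

lemma Proper.update {γ : Fin n → Fin k} (hγ : Proper G γ) {v : Fin n} {b : Fin k}
    (hfree : ∀ u, G.Adj v u → γ u ≠ b) : Proper G (Function.update γ v b) := by
  intro x y hxy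
  by_cases hx : x = v
  · subst hx
    have hy : y ≠ x := (G.ne_of_adj hxy).symm
    rw [Function.update_self, Function.update_of_ne hy]
    exact fun h => hfree y hxy h.symm
  · rw [Function.update_of_ne hx]
    by_cases hy : y = v
    · subst hy
      rw [Function.update_self]
      exact hfree x hxy.symm
    · rw [Function.update_of_ne hy]
      exact hγ hxy

lemma conn_update {γ : Fin n → Fin k} (hγ : Proper G γ) {v : Fin n} {b : Fin k}
    (hfree : ∀ u, G.Adj v u → γ u ≠ b)
    (hδ : Proper G (Function.update γ v b)) :
    Conn G k ⟨γ, hγ⟩ ⟨Function.update γ v b, hδ⟩ 1 := by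
  rcases eq_or_ne b (γ v) with rfl | hb
  · have h : (⟨γ, hγ⟩ : {c : Fin n → Fin k // Proper G c}) = ⟨Function.update γ v (γ v), hδ⟩ := by
      apply Subtype.ext
      exact (Function.update_eq_self v γ).symm
    rw [← h]
    exact Conn.refl _ 1
  · have hadj : (recolorGraph G k).Adj ⟨γ, hγ⟩ ⟨Function.update γ v b, hδ⟩ := by
      refine ⟨v, ?_, ?_⟩
      · simp only [Function.update_self]
        exact fun h => hb h.symm
      · intro w hw
        by_contra hwv
        simp only [Function.update_of_ne hwv] at hw
        exact hw rfl
    exact ⟨hadj.toWalk, by simp⟩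

end Machinery

section GrundyFacts

variable {n k : ℕ} {G : SimpleGraph (Fin n)} {B : Fin n → ℕ}

/-- Lower classes are frozen at their target colors. -/
def FrozenLow (B : Fin n → ℕ) (j : ℕ) {k : ℕ} (γ : Fin n → Fin k) : Prop :=
  ∀ v, B v < j → (γ v : ℕ) = B v

/-- The coloring is greedy-like from level `j` up: every vertex sees every color
in `[j, its own color)`. -/
def GrundyFrom (G : SimpleGraph (Fin n)) (j : ℕ) {k : ℕ} (γ : Fin n → Fin k) : Prop :=
  ∀ v c, j ≤ c → c < (γ v : ℕ) → ∃ u, G.Adj v u ∧ (γ u : ℕ) = c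

lemma inner_ge (hB : IsGrundy G B) {j : ℕ} {γ : Fin n → Fin k} (hγ : Proper G γ)
    (hfz : FrozenLow B j γ) : ∀ v, j ≤ B v → j ≤ (γ v : ℕ) := by
  intro v hv
  by_contra h
  push_neg at h
  obtain ⟨u, hu, hBu⟩ := hB.2 v ((γ v : ℕ)) (lt_of_lt_of_le h hv)
  have h2 : (γ u : ℕ) = (γ v : ℕ) := by
    rw [hfz u (by omega), hBu]
  exact hγ hu (Fin.val_injective h2).symm

lemma B_lt_ell {ℓ : ℕ} (hB : IsGrundy G B)
    (hcard : (Finset.univ.image B).card = ℓ) : ∀ v, B v < ℓ := by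
  intro v
  by_contra h
  push_neg at h
  have hsub : Finset.range (B v + 1) ⊆ Finset.univ.image B := by
    intro c hc
    simp only [Finset.mem_range] at hc
    rcases eq_or_lt_of_le (Nat.lt_succ_iff.mp hc) with rfl | hlt
    · exact Finset.mem_image.mpr ⟨v, Finset.mem_univ v, rfl⟩
    · obtain ⟨u, -, hu⟩ := hB.2 v c hlt
      exact Finset.mem_image.mpr ⟨u, Finset.mem_univ u, hu⟩
  have := Finset.card_le_card hsub
  rw [Finset.card_range, hcard] at this
  omega

lemma grundy_card_lt_k (hk : grundyNum G + 1 ≤ k) (c : Fin n → ℕ) (hc : IsGrundy G c) :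
    (Finset.univ.image c).card < k := by
  have hbdd : BddAbove {m | ∃ c' : Fin n → ℕ, IsGrundy G c' ∧ (Finset.univ.image c').card = m} := by
    refine ⟨n, ?_⟩
    rintro m ⟨c', -, rfl⟩
    exact (Finset.card_image_le).trans (by simp)
  have hmem : (Finset.univ.image c).card ∈
      {m | ∃ c' : Fin n → ℕ, IsGrundy G c' ∧ (Finset.univ.image c').card = m} := ⟨c, hc, rfl⟩
  have := le_csSup hbdd hmem
  have : (Finset.univ.image c).card ≤ grundyNum G := this
  omega

/-- After a sweep, no inner vertex can be colored `k-1`, else `G` would have a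
grundy coloring with at least `k` colors. -/
lemma no_top_color (hB : IsGrundy G B) (hk : grundyNum G + 1 ≤ k)
    {j : ℕ} {g : Fin n → Fin k} (hg : Proper G g) (hfz : FrozenLow B j g)
    (hgr : GrundyFrom G j g) : ∀ v, j ≤ B v → (g v : ℕ) < k - 1 := by
  intro v hv
  by_contra hle
  push_neg at hle
  have hgvlt : (g v : ℕ) < k := (g v).isLt
  have hgv : (g v : ℕ) = k - 1 := by omega
  have hge := inner_ge hB hg hfz
  set c' : Fin n → ℕ := fun u => if B u < j then B u else (g u : ℕ) with hc'
  have hc'high : ∀ u, j ≤ B u → c' u = (g u : ℕ) := by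
    intro u hu; simp only [hc']; rw [if_neg (by omega)]
  have hc'low : ∀ u, B u < j → c' u = B u := by
    intro u hu; simp only [hc']; rw [if_pos hu]
  -- any vertex with g-value c ≥ j is inner
  have hinner : ∀ u c, j ≤ c → (g u : ℕ) = c → j ≤ B u := by
    intro u c hc hgu
    by_contra hu
    push_neg at hu
    have := hfz u hu
    omega
  have hproper : ∀ ⦃x y⦄, G.Adj x y → c' x ≠ c' y := by
    intro x y hxy
    by_cases hx : B x < j <;> by_cases hy : B y < j
    · rw [hc'low x hx, hc'low y hy]; exact hB.1 hxy
    · rw [hc'low x hx, hc'high y (by omega)]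
      have := hge y (by omega); omega
    · rw [hc'high x (by omega), hc'low y hy]
      have := hge x (by omega); omega
    · rw [hc'high x (by omega), hc'high y (by omega)]
      exact fun h => hg hxy (Fin.val_injective h)
  have hgrundy : IsGrundy G c' := by
    refine ⟨hproper, ?_⟩
    intro w c hc
    by_cases hw : B w < j
    · rw [hc'low w hw] at hc
      obtain ⟨u, hu, hBu⟩ := hB.2 w c hc
      exact ⟨u, hu, by rw [hc'low u (by omega), hBu]⟩
    · push_neg at hw
      rw [hc'high w hw] at hc
      by_cases hcj : c < j
      · obtain ⟨u, hu, hBu⟩ := hB.2 w c (by omega)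
        exact ⟨u, hu, by rw [hc'low u (by omega), hBu]⟩
      · push_neg at hcj
        obtain ⟨u, hu, hgu⟩ := hgr w c hcj hc
        exact ⟨u, hu, by rw [hc'high u (hinner u c hcj hgu), hgu]⟩
  have himg : Finset.range k ⊆ Finset.univ.image c' := by
    intro c hc
    simp only [Finset.mem_range] at hc
    by_cases hcj : c < j
    · obtain ⟨u, -, hBu⟩ := hB.2 v c (by omega)
      exact Finset.mem_image.mpr ⟨u, Finset.mem_univ u, by rw [hc'low u (by omega), hBu]⟩
    · push_neg at hcj
      by_cases hck : c < k - 1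
      · obtain ⟨u, -, hgu⟩ := hgr v c hcj (by omega)
        exact Finset.mem_image.mpr ⟨u, Finset.mem_univ u,
          by rw [hc'high u (hinner u c hcj hgu), hgu]⟩
      · have hck1 : c = k - 1 := by omega
        exact Finset.mem_image.mpr ⟨v, Finset.mem_univ v, by rw [hc'high v hv, hgv, hck1]⟩
  have h1 : k ≤ (Finset.univ.image c').card := by
    calc k = (Finset.range k).card := (Finset.card_range k).symm
    _ ≤ _ := Finset.card_le_card himg
  have h2 := grundy_card_lt_k hk c' hgrundy
  omega

end GrundyFacts

section Sweep

variable {n k : ℕ} {G : SimpleGraph (Fin n)} {B : Fin n → ℕ}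

lemma sweepAux (hB : IsGrundy G B) {j : ℕ} :
    ∀ (N : ℕ) (L : Finset (Fin n)), L.card = N →
    ∀ (γ : Fin n → Fin k) (hγ : Proper G γ),
    FrozenLow B j γ →
    (∀ v ∈ L, j ≤ B v) →
    (∀ v, j ≤ B v → v ∉ L → ∀ c, j ≤ c → c < (γ v : ℕ) →
        ∃ u, G.Adj v u ∧ j ≤ B u ∧ u ∉ L ∧ (γ u : ℕ) = c) →
    (∀ x ∈ L, ∀ u, G.Adj x u → j ≤ B u → u ∉ L → (γ u : ℕ) < (γ x : ℕ)) →
    ∃ g, ∃ hg : Proper G g, FrozenLow B j g ∧ GrundyFrom G j g ∧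
      Conn G k ⟨γ, hγ⟩ ⟨g, hg⟩ N := by
  intro N
  induction N with
  | zero =>
    intro L hLcard γ hγ hfz hL hd hsort
    rw [Finset.card_eq_zero] at hLcard
    subst hLcard
    refine ⟨γ, hγ, hfz, ?_, Conn.refl _ 0⟩
    intro v c hjc hc
    by_cases hv : j ≤ B v
    · obtain ⟨u, hu1, hu2, hu3, hu4⟩ := hd v hv (Finset.notMem_empty v) c hjc hc
      exact ⟨u, hu1, hu4⟩
    · push_neg at hv
      have := hfz v hv
      omega
  | succ N ih =>
    intro L hLcard γ hγ hfz hL hd hsort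
    classical
    have hLne : L.Nonempty := Finset.card_pos.mp (by omega)
    obtain ⟨v, hvL, hmin⟩ := Finset.exists_min_image L (fun u => (γ u : ℕ)) hLne
    have hvB : j ≤ B v := hL v hvL
    set P : Finset ℕ :=
      (Finset.univ.filter (fun u => G.Adj v u ∧ j ≤ B u ∧ u ∉ L)).image
        (fun u => (γ u : ℕ)) with hP
    set T : Finset ℕ := (Finset.Ico j k) \ P with hT
    have hγvT : (γ v : ℕ) ∈ T := by
      rw [hT, Finset.mem_sdiff]
      constructor
      · rw [Finset.mem_Ico]
        exact ⟨inner_ge hB hγ hfz v hvB, (γ v).isLt⟩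
      · intro hmem
        rw [hP] at hmem
        obtain ⟨u, hu, hequ⟩ := Finset.mem_image.mp hmem
        rw [Finset.mem_filter] at hu
        have := hsort v hvL u hu.2.1 hu.2.2.1 hu.2.2.2
        omega
    have hTne : T.Nonempty := ⟨_, hγvT⟩
    set b : ℕ := T.min' hTne with hb
    have hbT : b ∈ T := T.min'_mem hTne
    have hbIco : b ∈ Finset.Ico j k := (Finset.mem_sdiff.mp hbT).1
    have hbP : b ∉ P := (Finset.mem_sdiff.mp hbT).2
    have hbj : j ≤ b := (Finset.mem_Ico.mp hbIco).1
    have hbk : b < k := (Finset.mem_Ico.mp hbIco).2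
    have hble : b ≤ (γ v : ℕ) := Finset.min'_le T _ hγvT
    have hmex : ∀ c, j ≤ c → c < b → c ∈ P := by
      intro c hjc hcb
      by_contra hc
      have hcT : c ∈ T := Finset.mem_sdiff.mpr ⟨Finset.mem_Ico.mpr ⟨hjc, by omega⟩, hc⟩
      have := Finset.min'_le T c hcT
      omega
    set bF : Fin k := ⟨b, hbk⟩ with hbF
    have hfree : ∀ u, G.Adj v u → γ u ≠ bF := by
      intro u hu hEq
      have hEqv : (γ u : ℕ) = b := by rw [hEq]
      by_cases huL : u ∈ L
      · have h1 := hmin u huL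
        have h2 : γ v ≠ γ u := hγ hu
        have h3 : (γ v : ℕ) ≠ (γ u : ℕ) := fun h => h2 (Fin.val_injective h)
        omega
      · by_cases huB : j ≤ B u
        · apply hbP
          rw [hP]
          exact Finset.mem_image.mpr ⟨u, Finset.mem_filter.mpr
            ⟨Finset.mem_univ u, hu, huB, huL⟩, hEqv⟩
        · push_neg at huB
          have := hfz u huB
          omega
    have hγ' : Proper G (Function.update γ v bF) := hγ.update hfree
    set γ' := Function.update γ v bF with hγ'def
    have hstep : Conn G k ⟨γ, hγ⟩ ⟨γ', hγ'⟩ 1 := conn_update hγ hfree hγ'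
    set L' := L.erase v with hL'
    have hL'card : L'.card = N := by
      rw [hL', Finset.card_erase_of_mem hvL, hLcard]
      omega
    have hnotv : ∀ u, u ∉ L → (γ' u : ℕ) = (γ u : ℕ) := by
      intro u huL
      have : u ≠ v := fun h => huL (h ▸ hvL)
      rw [hγ'def, Function.update_of_ne this]
    have hsub : ∀ u, u ∉ L → u ∉ L' := fun u h => fun h' => h (Finset.erase_subset v L h')
    -- recursive call
    obtain ⟨g, hg, hfzg, hgrg, hconn⟩ := ih L' hL'card γ' hγ'
      (by -- FrozenLow
        intro w hw
        have hwv : w ≠ v := by intro h; subst h; omega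
        rw [hγ'def, Function.update_of_ne hwv]
        exact hfz w hw)
      (fun w hw => hL w (Finset.erase_subset v L hw))
      (by -- processed grundy invariant
        intro w hwB hwL' c hjc hc
        by_cases hwv : w = v
        · subst hwv
          rw [hγ'def, Function.update_self] at hc
          obtain ⟨u, hu, hequ⟩ := Finset.mem_image.mp (hmex c hjc hc)
          rw [Finset.mem_filter] at hu
          refine ⟨u, hu.2.1, hu.2.2.1, hsub u hu.2.2.2, ?_⟩
          rw [hnotv u hu.2.2.2, hequ]
        · have hwL : w ∉ L := by
            intro h
            exact hwL' (Finset.mem_erase.mpr ⟨hwv, h⟩)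
          rw [hγ'def, Function.update_of_ne hwv] at hc
          obtain ⟨u, hu1, hu2, hu3, hu4⟩ := hd w hwB hwL c hjc hc
          exact ⟨u, hu1, hu2, hsub u hu3, by rw [hnotv u hu3, hu4]⟩)
      (by -- sortedness invariant
        intro x hxL' u hadj huB huL'
        have hxL : x ∈ L := Finset.erase_subset v L hxL'
        have hxv : x ≠ v := (Finset.mem_erase.mp hxL').1
        rw [hγ'def, Function.update_of_ne hxv]
        by_cases huv : u = v
        · subst huv
          rw [Function.update_self]
          have h1 : (γ u : ℕ) ≤ (γ x : ℕ) := hmin x hxL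
          have h2 : γ x ≠ γ u := hγ hadj
          have h3 : (γ x : ℕ) ≠ (γ u : ℕ) := fun h => h2 (Fin.val_injective h)
          have hvalb : (bF : ℕ) = b := rfl
          show (bF : ℕ) < (γ x : ℕ)
          omega
        · rw [Function.update_of_ne huv]
          have huL : u ∉ L := by
            intro h
            exact huL' (Finset.mem_erase.mpr ⟨huv, h⟩)
          exact hsort x hxL u hadj huB huL)
    refine ⟨g, hg, hfzg, hgrg, ?_⟩
    have := hstep.trans hconn
    exact this.mono (by omega)

end Sweep

section Unblock

variable {n k : ℕ} {G : SimpleGraph (Fin n)} {B : Fin n → ℕ}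

lemma unblockAux (hB : IsGrundy G B) (hk : grundyNum G + 1 ≤ k) {j : ℕ} (hjk : j + 1 < k)
    {g : Fin n → Fin k} (hg : Proper G g) (hfzg : FrozenLow B j g) (hgrg : GrundyFrom G j g) :
    ∀ (N : ℕ) (L : Finset (Fin n)), L.card = N →
    (∀ w ∈ L, j < B w ∧ (g w : ℕ) = j) →
    ∀ (δ : Fin n → Fin k) (hδ : Proper G δ),
    (∀ w, δ w = g w ∨ ((δ w : ℕ) = k - 1 ∧ (g w : ℕ) = j ∧ j < B w ∧ w ∉ L)) →
    (∀ w ∈ L, δ w = g w) →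
    (∀ w, j < B w → (g w : ℕ) = j → (w ∈ L ∨ (δ w : ℕ) = k - 1)) →
    ∃ δ', ∃ hδ' : Proper G δ', FrozenLow B j δ' ∧
      (∀ v, j < B v → (δ' v : ℕ) ≠ j) ∧
      Conn G k ⟨δ, hδ⟩ ⟨δ', hδ'⟩ N := by
  have hntop := no_top_color hB hk hg hfzg hgrg
  intro N
  induction N with
  | zero =>
    intro L hLcard hLprop δ hδ hA hBinv hC
    rw [Finset.card_eq_zero] at hLcard
    subst hLcard
    refine ⟨δ, hδ, ?_, ?_, Conn.refl _ 0⟩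
    · intro v hv
      rcases hA v with h | h
      · rw [h]; exact hfzg v hv
      · have := hfzg v hv; omega
    · intro v hv
      by_cases hgv : (g v : ℕ) = j
      · rcases hC v hv hgv with h | h
        · exact absurd h (Finset.notMem_empty v)
        · omega
      · rcases hA v with h | h
        · rw [h]; exact hgv
        · omega
  | succ N ih =>
    intro L hLcard hLprop δ hδ hA hBinv hC
    classical
    have hLne : L.Nonempty := Finset.card_pos.mp (by omega)
    obtain ⟨u, huL⟩ := hLne
    obtain ⟨huB, hgu⟩ := hLprop u huL
    set topF : Fin k := ⟨k - 1, by omega⟩ with htopF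
    have hfree : ∀ w, G.Adj u w → δ w ≠ topF := by
      intro w hadj hEq
      have hEqv : (δ w : ℕ) = k - 1 := by rw [hEq]
      rcases hA w with h | h
      · -- δ w = g w
        rw [h] at hEqv
        by_cases hwB : j ≤ B w
        · have := hntop w hwB; omega
        · push_neg at hwB
          have := hfzg w hwB; omega
      · -- w is a processed blocker: but then g w = j = g u, contradicting properness of g
        have h1 : (g u : ℕ) = (g w : ℕ) := by omega
        exact hg hadj (Fin.val_injective h1)
    have hδ' : Proper G (Function.update δ u topF) := hδ.update hfree
    set δ' := Function.update δ u topF with hδ'def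
    have hstep : Conn G k ⟨δ, hδ⟩ ⟨δ', hδ'⟩ 1 := conn_update hδ hfree hδ'
    set L' := L.erase u with hL'
    have hL'card : L'.card = N := by
      rw [hL', Finset.card_erase_of_mem huL, hLcard]; omega
    obtain ⟨δ'', hδ'', hfz'', hnb'', hconn''⟩ := ih L' hL'card
      (fun w hw => hLprop w (Finset.erase_subset u L hw)) δ' hδ'
      (by
        intro w
        by_cases hwu : w = u
        · subst hwu
          right
          refine ⟨by rw [hδ'def, Function.update_self], hgu, huB, ?_⟩
          exact fun h => (Finset.mem_erase.mp h).1 rfl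
        · rw [hδ'def, Function.update_of_ne hwu]
          rcases hA w with h | h
          · exact Or.inl h
          · exact Or.inr ⟨h.1, h.2.1, h.2.2.1, fun hmem => h.2.2.2 (Finset.erase_subset u L hmem)⟩)
      (by
        intro w hw
        have hwu : w ≠ u := (Finset.mem_erase.mp hw).1
        rw [hδ'def, Function.update_of_ne hwu]
        exact hBinv w (Finset.erase_subset u L hw))
      (by
        intro w hw1 hw2
        by_cases hwu : w = u
        · subst hwu
          right
          rw [hδ'def, Function.update_self]
        · rcases hC w hw1 hw2 with h | h
          · rcases Finset.mem_erase.mp (Finset.mem_erase.mpr ⟨hwu, h⟩) with _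
            exact Or.inl (Finset.mem_erase.mpr ⟨hwu, h⟩)
          · right
            rw [hδ'def, Function.update_of_ne hwu]
            exact h)
    refine ⟨δ'', hδ'', hfz'', hnb'', ?_⟩
    exact (hstep.trans hconn'').mono (by omega)

end Unblock

section Finalize

variable {n k : ℕ} {G : SimpleGraph (Fin n)} {B : Fin n → ℕ}

lemma finalizeAux (hB : IsGrundy G B) {j : ℕ} (hjk : j < k) :
    ∀ (N : ℕ) (L : Finset (Fin n)), L.card = N →
    (∀ w ∈ L, B w = j) →
    ∀ (δ : Fin n → Fin k) (hδ : Proper G δ),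
    FrozenLow B j δ →
    (∀ v, j < B v → (δ v : ℕ) ≠ j) →
    (∀ v, B v = j → v ∉ L → (δ v : ℕ) = j) →
    ∃ ε, ∃ hε : Proper G ε, FrozenLow B (j + 1) ε ∧
      Conn G k ⟨δ, hδ⟩ ⟨ε, hε⟩ N := by
  intro N
  induction N with
  | zero =>
    intro L hLcard hLprop δ hδ hfz hnb hdone
    rw [Finset.card_eq_zero] at hLcard
    subst hLcard
    refine ⟨δ, hδ, ?_, Conn.refl _ 0⟩
    intro v hv
    by_cases hvj : B v = j
    · rw [hdone v hvj (Finset.notMem_empty v), hvj]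
    · exact hfz v (by omega)
  | succ N ih =>
    intro L hLcard hLprop δ hδ hfz hnb hdone
    classical
    have hLne : L.Nonempty := Finset.card_pos.mp (by omega)
    obtain ⟨u, huL⟩ := hLne
    have huB : B u = j := hLprop u huL
    set jF : Fin k := ⟨j, hjk⟩ with hjF
    have hfree : ∀ w, G.Adj u w → δ w ≠ jF := by
      intro w hadj hEq
      have hEqv : (δ w : ℕ) = j := by rw [hEq]
      have hBwu : B u ≠ B w := hB.1 hadj
      by_cases hwB : j < B w
      · exact hnb w hwB hEqv
      · have : B w < j := by omega
        have := hfz w this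
        omega
    have hδ' : Proper G (Function.update δ u jF) := hδ.update hfree
    set δ' := Function.update δ u jF with hδ'def
    have hstep : Conn G k ⟨δ, hδ⟩ ⟨δ', hδ'⟩ 1 := conn_update hδ hfree hδ'
    set L' := L.erase u with hL'
    have hL'card : L'.card = N := by
      rw [hL', Finset.card_erase_of_mem huL, hLcard]; omega
    obtain ⟨ε, hε, hfzε, hconnε⟩ := ih L' hL'card
      (fun w hw => hLprop w (Finset.erase_subset u L hw)) δ' hδ'
      (by
        intro w hw
        have hwu : w ≠ u := by intro h; subst h; omega
        rw [hδ'def, Function.update_of_ne hwu]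
        exact hfz w hw)
      (by
        intro w hw
        have hwu : w ≠ u := by intro h; subst h; omega
        rw [hδ'def, Function.update_of_ne hwu]
        exact hnb w hw)
      (by
        intro w hw hwL'
        by_cases hwu : w = u
        · subst hwu
          rw [hδ'def, Function.update_self]
        · rw [hδ'def, Function.update_of_ne hwu]
          exact hdone w hw (fun h => hwL' (Finset.mem_erase.mpr ⟨hwu, h⟩)))
    refine ⟨ε, hε, hfzε, ?_⟩
    exact (hstep.trans hconnε).mono (by omega)

end Finalize

section Phases

variable {n k : ℕ} {G : SimpleGraph (Fin n)} {B : Fin n → ℕ}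

/-- Per-vertex recoloring budget from phase `j` on. -/
def wgt (B : Fin n → ℕ) (ℓ j : ℕ) (v : Fin n) : ℕ :=
  if B v < j then 0 else 2 * (B v - j) + (if B v = ℓ - 1 then 1 else 2)

def Wsum (B : Fin n → ℕ) (ℓ j : ℕ) : ℕ := ∑ v, wgt B ℓ j v

lemma Wsum_ell (ℓ : ℕ) (hBl : ∀ v, B v < ℓ) : Wsum B ℓ ℓ = 0 := by
  apply Finset.sum_eq_zero
  intro v _
  rw [wgt, if_pos (hBl v)]

lemma Wsum_top (ℓ : ℕ) (hℓ : 1 ≤ ℓ) (hBl : ∀ v, B v < ℓ) :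
    Wsum B ℓ (ℓ - 1) = (Finset.univ.filter fun v => B v = ℓ - 1).card := by
  rw [Finset.card_eq_sum_ones, Finset.sum_filter, Wsum]
  apply Finset.sum_congr rfl
  intro v _
  have := hBl v
  rw [wgt]
  split_ifs <;> omega

lemma Wsum_step (ℓ j : ℕ) (hj : j + 2 ≤ ℓ) (hBl : ∀ v, B v < ℓ) :
    Wsum B ℓ j = Wsum B ℓ (j + 1) + 2 * (Finset.univ.filter fun v => j ≤ B v).card := by
  have hcard : (2 : ℕ) * (Finset.univ.filter fun v => j ≤ B v).card
      = ∑ v, if j ≤ B v then 2 else 0 := by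
    rw [← Finset.sum_filter, Finset.sum_const, smul_eq_mul, mul_comm]
  rw [Wsum, Wsum, hcard, ← Finset.sum_add_distrib]
  apply Finset.sum_congr rfl
  intro v _
  rw [wgt, wgt]
  split_ifs <;> omega

lemma card_split (j : ℕ) :
    (Finset.univ.filter fun v : Fin n => j < B v).card
      + (Finset.univ.filter fun v : Fin n => B v = j).card
      = (Finset.univ.filter fun v : Fin n => j ≤ B v).card := by
  rw [← Finset.card_union_of_disjoint (by
    rw [Finset.disjoint_left]
    intro a ha hb
    simp only [Finset.mem_filter] at ha hb
    omega)]
  congr 1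
  ext v
  simp only [Finset.mem_union, Finset.mem_filter, Finset.mem_univ, true_and]
  omega

lemma phases (hB : IsGrundy G B) (hk : grundyNum G + 1 ≤ k) {ℓ : ℕ}
    (hcard : (Finset.univ.image B).card = ℓ) (hℓk : ℓ < k)
    (βF : Fin n → Fin k) (hβF : ∀ v, (βF v : ℕ) = B v) (hβp : Proper G βF) :
    ∀ (m j : ℕ), j + m = ℓ →
    ∀ (γ : Fin n → Fin k), ∀ hγ : Proper G γ, FrozenLow B j γ →
    Conn G k ⟨γ, hγ⟩ ⟨βF, hβp⟩ (Wsum B ℓ j) := by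
  have hBl := B_lt_ell hB hcard
  intro m
  induction m with
  | zero =>
    intro j hj γ hγ hfz
    have hγβ : γ = βF := by
      funext v
      apply Fin.val_injective
      rw [hβF v, hfz v (by have := hBl v; omega)]
    subst hγβ
    exact Conn.refl _ _
  | succ m ih =>
    intro j hj γ hγ hfz
    classical
    rcases Nat.eq_zero_or_pos m with rfl | hm
    · -- top phase: j = ℓ - 1, finalize only
      have hjℓ : j = ℓ - 1 := by omega
      have hjk : j < k := by omega
      obtain ⟨ε, hε, hfzε, hconn⟩ := finalizeAux hB hjk
        (Finset.univ.filter fun v => B v = j).card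
        (Finset.univ.filter fun v => B v = j) rfl
        (fun w hw => (Finset.mem_filter.mp hw).2) γ hγ hfz
        (by intro v hv; have := hBl v; omega)
        (by
          intro v hv hvL
          exact absurd (Finset.mem_filter.mpr ⟨Finset.mem_univ v, hv⟩) hvL)
      have hrest := ih (j + 1) (by omega) ε hε hfzε
      have htot := hconn.trans hrest
      apply htot.mono
      have h1 : Wsum B ℓ (j + 1) = 0 := by
        have : j + 1 = ℓ := by omega
        rw [this]
        exact Wsum_ell ℓ hBl
      have h2 : Wsum B ℓ j = (Finset.univ.filter fun v => B v = j).card := by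
        rw [hjℓ]
        exact Wsum_top ℓ (by omega) hBl
      omega
    · -- ordinary phase: sweep, unblock, finalize
      have hjk1 : j + 1 < k := by omega
      -- sweep
      obtain ⟨g, hg, hfzg, hgrg, hconn1⟩ := sweepAux hB
        (Finset.univ.filter fun v => j ≤ B v).card
        (Finset.univ.filter fun v => j ≤ B v) rfl γ hγ hfz
        (fun v hv => (Finset.mem_filter.mp hv).2)
        (by
          intro v hv hvL
          exact absurd (Finset.mem_filter.mpr ⟨Finset.mem_univ v, hv⟩) hvL)
        (by
          intro x hx u hadj hu huL
          exact absurd (Finset.mem_filter.mpr ⟨Finset.mem_univ u, hu⟩) huL)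
      -- unblock
      obtain ⟨δ, hδ, hfzδ, hnbδ, hconn2⟩ := unblockAux hB hk hjk1 hg hfzg hgrg
        (Finset.univ.filter fun v => j < B v ∧ (g v : ℕ) = j).card
        (Finset.univ.filter fun v => j < B v ∧ (g v : ℕ) = j) rfl
        (fun w hw => (Finset.mem_filter.mp hw).2) g hg
        (fun w => Or.inl rfl)
        (fun w _ => rfl)
        (by
          intro w hw1 hw2
          exact Or.inl (Finset.mem_filter.mpr ⟨Finset.mem_univ w, hw1, hw2⟩))
      -- finalize
      obtain ⟨ε, hε, hfzε, hconn3⟩ := finalizeAux hB (by omega : j < k)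
        (Finset.univ.filter fun v => B v = j).card
        (Finset.univ.filter fun v => B v = j) rfl
        (fun w hw => (Finset.mem_filter.mp hw).2) δ hδ hfzδ hnbδ
        (by
          intro v hv hvL
          exact absurd (Finset.mem_filter.mpr ⟨Finset.mem_univ v, hv⟩) hvL)
      have hrest := ih (j + 1) (by omega) ε hε hfzε
      have htot := hconn1.trans (hconn2.trans (hconn3.trans hrest))
      apply htot.mono
      have hstepW := Wsum_step ℓ j (by omega) hBl
      have hsplit := card_split (B := B) j
      have hble : (Finset.univ.filter fun v => j < B v ∧ (g v : ℕ) = j).card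
          ≤ (Finset.univ.filter fun v : Fin n => j < B v).card := by
        apply Finset.card_le_card
        intro v hv
        have := Finset.mem_filter.mp hv
        exact Finset.mem_filter.mpr ⟨this.1, this.2.1⟩
      omega

end Phases

/-- If `k ≥ χ_g(G) + 1 > ℓ`, then for any proper `k`-coloring `α`
and any grundy coloring `β` using exactly `ℓ` colors, the distance between `α` and
`β` in the `k`-recoloring graph is at most `(2ℓ − 1)·n`. -/
theorem grundy_distance (n k ℓ : ℕ) (G : SimpleGraph (Fin n))
    (hk : grundyNum G + 1 ≤ k) (hℓ : ℓ < grundyNum G + 1)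
    (α : Fin n → Fin k) (hα : Proper G α)
    (β : Fin n → Fin k) (hβ : IsGrundy G (fun v => (β v : ℕ)))
    (hβℓ : (Finset.univ.image β).card = ℓ) :
    (recolorGraph G k).Reachable ⟨α, hα⟩ ⟨β, hβ.proper⟩ ∧
      (recolorGraph G k).dist ⟨α, hα⟩ ⟨β, hβ.proper⟩ ≤ (2 * ℓ - 1) * n := by
  set B : Fin n → ℕ := fun v => (β v : ℕ) with hBdef
  have hcardB : (Finset.univ.image B).card = ℓ := by
    have himg : Finset.univ.image B = (Finset.univ.image β).image Fin.val := by
      rw [Finset.image_image]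
      rfl
    rw [himg, Finset.card_image_of_injective _ Fin.val_injective, hβℓ]
  have hℓk : ℓ < k := by omega
  have hBl := B_lt_ell hβ hcardB
  have hconn := phases hβ hk hcardB hℓk β (fun v => rfl) hβ.proper ℓ 0 (by omega)
    α hα (by intro v hv; omega)
  have hW0 : Wsum B ℓ 0 ≤ (2 * ℓ - 1) * n := by
    calc Wsum B ℓ 0 ≤ ∑ _v : Fin n, (2 * ℓ - 1) := by
          apply Finset.sum_le_sum
          intro v _
          have := hBl v
          rw [wgt]
          split_ifs <;> omega
    _ = (2 * ℓ - 1) * n := by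
          rw [Finset.sum_const, Finset.card_univ, Fintype.card_fin, smul_eq_mul, mul_comm]
  obtain ⟨w, hw⟩ := hconn
  exact ⟨⟨w⟩, (SimpleGraph.dist_le w).trans (hw.trans hW0)⟩
end

section
/- Let T be an ℓ-complete tree decomposition of a graph G and let x be a baby of T, i.e. a vertex appearing in exactly one bag B_u where u is a leaf of T. Then T[V∖{x}] (the tree decomposition obtained by removing x from all bags and contracting every edge uv of T for which B_u∖{x} ⊆ B_v∖{x}) is an ℓ-complete tree decomposition of G∖x. -/
open SimpleGraph

lemma reach_avoid {ι : Type} {T : SimpleGraph ι} {u w : ι}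
    (hw : ∀ v, T.Adj u v → v = w) (S : Set ι) :
    ∀ (m : ℕ) (a b : S) (W : (T.induce S).Walk a b), W.length ≤ m →
      ∀ (ha : (a : ι) ≠ u) (hb : (b : ι) ≠ u),
      (T.induce {v | v ∈ S ∧ v ≠ u}).Reachable ⟨a.1, a.2, ha⟩ ⟨b.1, b.2, hb⟩ := by
  intro m
  induction m with
  | zero =>
      intro a b W hlen ha hb
      cases W with
      | nil => exact Reachable.refl _
      | cons h W' => simp at hlen
  | succ m ih =>
      intro a b W hlen ha hb
      cases W with
      | nil => exact Reachable.refl _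
      | cons h W' =>
        rename_i c
        by_cases hc : (c : ι) = u
        · cases W' with
          | nil => exact absurd hc hb
          | cons h' W'' =>
            rename_i d
            have had : a = d := by
              apply Subtype.ext
              have h1 : T.Adj u a.1 := by
                have h1' : T.Adj (c : ι) (a : ι) := h.symm
                rwa [hc] at h1'
              have h2 : T.Adj u d.1 := by
                have h2' : T.Adj (c : ι) (d : ι) := h'
                rwa [hc] at h2'
              rw [hw _ h1, hw _ h2]
            subst had
            exact ih a b W'' (by simp [Walk.length_cons] at hlen; omega) ha hb
        · have step : (T.induce {v | v ∈ S ∧ v ≠ u}).Adj ⟨a.1, a.2, ha⟩ ⟨c.1, c.2, hc⟩ := h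
          exact (step.reachable).trans
            (ih c b W' (by simp [Walk.length_cons] at hlen; omega) hc hb)

lemma induce_connected_avoid {ι : Type} {T : SimpleGraph ι} {u w : ι}
    (hw : ∀ v, T.Adj u v → v = w)
    {S : Set ι} (hS : (T.induce S).Connected)
    (hne : ∃ v, v ∈ S ∧ v ≠ u) :
    (T.induce {v | v ∈ S ∧ v ≠ u}).Connected := by
  obtain ⟨v0, hv0⟩ := hne
  haveI : Nonempty ({v | v ∈ S ∧ v ≠ u} : Set ι) := ⟨⟨v0, hv0⟩⟩
  refine ⟨fun a b => ?_⟩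
  obtain ⟨W⟩ := hS ⟨a.1, a.2.1⟩ ⟨b.1, b.2.1⟩
  exact reach_avoid hw S W.length ⟨a.1, a.2.1⟩ ⟨b.1, b.2.1⟩ W le_rfl a.2.2 b.2.2


/-- Removing a baby `x` (a vertex appearing in exactly one bag
`B_u`, with `u` a leaf of `T`) from an `ℓ`-complete tree decomposition — which
contracts the edge at the leaf `u`, i.e. deletes the node `u` — yields an
`ℓ`-complete tree decomposition of `G ∖ x`. -/
theorem baby_removal (n ℓ : ℕ) (V : Type) [DecidableEq V] (G : SimpleGraph V)
    (td : TreeDecomp G (Fin n)) (hcomp : td.IsComplete ℓ)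
    (x : V) (u : Fin n)
    (hleaf : ∃! w, td.T.Adj u w)
    (hx : x ∈ td.bag u) (hunique : ∀ v, x ∈ td.bag v → v = u) :
    ∃ td' : TreeDecomp (G.induce {y : V | y ≠ x}) {v : Fin n // v ≠ u},
      td'.T = td.T.induce {v : Fin n | v ≠ u} ∧
      (∀ (v : {v : Fin n // v ≠ u}) (y : {y : V | y ≠ x}),
        y ∈ td'.bag v ↔ (y : V) ∈ td.bag v.1) ∧
      td'.IsComplete ℓ := by
  classical
  obtain ⟨w, huw, hwuniq⟩ := hleaf
  have hw : ∀ v, td.T.Adj u v → v = w := fun v hv => hwuniq v hv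
  have hwu : w ≠ u := huw.ne'
  have hxw : x ∉ td.bag w := fun h => hwu (hunique w h)
  -- x is the only vertex of bag u not in bag w
  have hsub : ∀ z ∈ td.bag u, z ≠ x → z ∈ td.bag w := by
    intro z hz hzx
    by_contra hzw
    have hdiff : (td.bag u \ td.bag w).card = 1 := by
      rw [← Finset.sdiff_inter_self_left,
        Finset.card_sdiff_of_subset Finset.inter_subset_left, hcomp.1 u, hcomp.2 huw]
      omega
    have hpair : ({x, z} : Finset V) ⊆ td.bag u \ td.bag w := by
      intro a ha
      rcases Finset.mem_insert.1 ha with rfl | ha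
      · exact Finset.mem_sdiff.2 ⟨hx, hxw⟩
      · rw [Finset.mem_singleton] at ha
        subst ha
        exact Finset.mem_sdiff.2 ⟨hz, hzw⟩
    have := Finset.card_le_card hpair
    rw [Finset.card_pair (Ne.symm hzx), hdiff] at this
    omega
  haveI : DecidablePred (· ∈ {y : V | y ≠ x}) := fun y =>
    show Decidable (y ≠ x) from inferInstance
  set bag' : {v : Fin n // v ≠ u} → Finset {y : V | y ≠ x} :=
    fun v => (td.bag v.1).subtype (· ∈ {y : V | y ≠ x}) with hbag'
  have hmem : ∀ (v : {v : Fin n // v ≠ u}) (y : {y : V | y ≠ x}),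
      y ∈ bag' v ↔ (y : V) ∈ td.bag v.1 := fun v y => Finset.mem_subtype
  have hxbag : ∀ (v : {v : Fin n // v ≠ u}), x ∉ td.bag v.1 :=
    fun v h => v.2 (hunique v.1 h)
  -- the tree
  have hconnuniv : (td.T.induce (Set.univ : Set (Fin n))).Connected :=
    Connected.map (induceUnivIso td.T).symm.toHom
      (induceUnivIso td.T).symm.toEquiv.surjective td.isTree.isConnected
  have hconn' : (td.T.induce {v | v ∈ (Set.univ : Set (Fin n)) ∧ v ≠ u}).Connected :=
    induce_connected_avoid hw hconnuniv ⟨w, Set.mem_univ _, hwu⟩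
  have htree' : (td.T.induce {v : Fin n | v ≠ u}).IsTree := by
    constructor
    · refine Connected.map
        ⟨fun a => ⟨a.1, a.2.2⟩, fun {a b} h => h⟩ ?_ hconn'
      rintro ⟨v, hv⟩
      exact ⟨⟨v, Set.mem_univ _, hv⟩, rfl⟩
    · intro v c hc
      have hinj : Function.Injective
          ((Embedding.induce {v : Fin n | v ≠ u}).toHom :
            td.T.induce {v : Fin n | v ≠ u} →g td.T) := Subtype.val_injective
      exact td.isTree.IsAcyclic _ (hc.map hinj)
  refine ⟨⟨td.T.induce {v : Fin n | v ≠ u}, htree', bag', ?_, ?_, ?_⟩, rfl, hmem, ?_, ?_⟩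
  · -- mem_bag
    rintro ⟨y, hy⟩
    obtain ⟨v, hv⟩ := td.mem_bag y
    by_cases hvu : v = u
    · exact ⟨⟨w, hwu⟩, (hmem _ _).2 (hsub y (hvu ▸ hv) hy)⟩
    · exact ⟨⟨v, hvu⟩, (hmem _ _).2 hv⟩
  · -- edge_bag
    rintro ⟨y, hy⟩ ⟨z, hz⟩ hadj
    obtain ⟨v, hv1, hv2⟩ := td.edge_bag hadj
    by_cases hvu : v = u
    · subst hvu
      exact ⟨⟨w, hwu⟩, (hmem _ _).2 (hsub y hv1 hy), (hmem _ _).2 (hsub z hv2 hz)⟩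
    · exact ⟨⟨v, hvu⟩, (hmem _ _).2 hv1, (hmem _ _).2 hv2⟩
  · -- support_connected
    rintro ⟨y, hy⟩
    have hS := td.support_connected y
    have hne : ∃ v, v ∈ {v : Fin n | y ∈ td.bag v} ∧ v ≠ u := by
      obtain ⟨v, hv⟩ := td.mem_bag y
      by_cases hvu : v = u
      · exact ⟨w, hsub y (hvu ▸ hv) hy, hwu⟩
      · exact ⟨v, hv, hvu⟩
    have hc := induce_connected_avoid hw hS hne
    let f : ↥{v | v ∈ {v : Fin n | y ∈ td.bag v} ∧ v ≠ u} →
        ↥{p : {v : Fin n // v ≠ u} | (⟨y, hy⟩ : {y : V | y ≠ x}) ∈ bag' p} :=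
      fun a => ⟨⟨a.1, a.2.2⟩,
        show (⟨y, hy⟩ : {y : V | y ≠ x}) ∈ bag' ⟨a.1, a.2.2⟩ from
          (hmem ⟨a.1, a.2.2⟩ ⟨y, hy⟩).2 a.2.1⟩
    refine Connected.map ⟨f, fun {a b} h => h⟩ ?_ hc
    rintro ⟨⟨v, hvu⟩, hp⟩
    exact ⟨⟨v, (hmem ⟨v, hvu⟩ ⟨y, hy⟩).1 hp, hvu⟩, rfl⟩
  · -- bag sizes
    intro v
    show ((td.bag v.1).subtype (· ∈ {y : V | y ≠ x})).card = ℓ + 1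
    rw [Finset.card_subtype, Finset.filter_true_of_mem, hcomp.1 v.1]
    intro z hz
    exact fun hzx => hxbag v (hzx ▸ hz)
  · -- intersections
    intro v v' hadj
    have hinter : bag' v ∩ bag' v' =
        (td.bag v.1 ∩ td.bag v'.1).subtype (· ∈ {y : V | y ≠ x}) := by
      ext a
      simp [hbag', Finset.mem_subtype]
    have hadj' : td.T.Adj v.1 v'.1 := hadj
    rw [hinter, Finset.card_subtype, Finset.filter_true_of_mem, hcomp.2 hadj']
    intro z hz
    exact fun hzx => hxbag v (hzx ▸ (Finset.mem_inter.1 hz).1)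
end

section
/- Let T be an ℓ-complete tree decomposition of a graph G. Then the family partition of V(G) (the partition into equivalence classes of the transitive closure of the T-parent relation) exists and is unique; it consists of exactly ℓ+1 families; each family contains exactly one vertex of every bag of T; and each family is an independent set of G. -/
open SimpleGraph

section Fam

variable {n ℓ : ℕ} {V : Type} [DecidableEq V] {G : SimpleGraph V}

noncomputable def TreeDecomp.stepF (td : TreeDecomp G (Fin n)) (u v : Fin n) (x : V) : V :=
  if x ∈ td.bag v then x
  else if h : (td.bag v \ td.bag u).Nonempty then h.choose else x

noncomputable def TreeDecomp.pushW (td : TreeDecomp G (Fin n)) :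
    ∀ {u v : Fin n}, td.T.Walk u v → V → V
  | _, _, .nil => id
  | u, _, .cons (v := w) _ p => td.pushW p ∘ td.stepF u w

variable {td : TreeDecomp G (Fin n)} (hcomp : td.IsComplete ℓ)
include hcomp

lemma sdiff_card {u v : Fin n} (h : td.T.Adj u v) : (td.bag u \ td.bag v).card = 1 := by
  have h1 := hcomp.1 u
  have h2 := hcomp.2 h
  rw [← Finset.sdiff_inter_self_left, Finset.card_sdiff_of_subset Finset.inter_subset_left, h1, h2]
  omega

lemma sdiff_singleton {u v : Fin n} (h : td.T.Adj u v) {x : V} (hx : x ∈ td.bag u)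
    (hx' : x ∉ td.bag v) : td.bag u \ td.bag v = {x} := by
  obtain ⟨a, ha⟩ := Finset.card_eq_one.1 (sdiff_card hcomp h)
  have : x ∈ td.bag u \ td.bag v := Finset.mem_sdiff.2 ⟨hx, hx'⟩
  rw [ha] at this ⊢
  rw [Finset.mem_singleton.1 this]

omit hcomp in
lemma stepF_eq {u v : Fin n} {x : V} (hx : x ∈ td.bag v) : td.stepF u v x = x :=
  if_pos hx

lemma stepF_sdiff {u v : Fin n} (h : td.T.Adj u v) {x : V} (hx' : x ∉ td.bag v) :
    td.stepF u v x ∈ td.bag v \ td.bag u := by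
  have hne : (td.bag v \ td.bag u).Nonempty :=
    Finset.card_pos.1 (by rw [sdiff_card hcomp h.symm]; norm_num)
  rw [TreeDecomp.stepF, if_neg hx', dif_pos hne]
  exact hne.choose_spec

lemma stepF_mem {u v : Fin n} (h : td.T.Adj u v) {x : V} (_ : x ∈ td.bag u) :
    td.stepF u v x ∈ td.bag v := by
  by_cases hx' : x ∈ td.bag v
  · rw [stepF_eq hx']; exact hx'
  · exact (Finset.mem_sdiff.1 (stepF_sdiff hcomp h hx')).1

lemma parent_stepF {u v : Fin n} (h : td.T.Adj u v) {x : V} (hx : x ∈ td.bag u)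
    (hx' : x ∉ td.bag v) : td.Parent x (td.stepF u v x) := by
  have hs := stepF_sdiff hcomp h hx'
  have hs' := Finset.mem_sdiff.1 hs
  exact ⟨u, v, h, sdiff_singleton hcomp h hx hx',
    sdiff_singleton hcomp h.symm hs'.1 hs'.2⟩

lemma stepF_stepF {u v : Fin n} (h : td.T.Adj u v) {x : V} (hx : x ∈ td.bag u) :
    td.stepF v u (td.stepF u v x) = x := by
  by_cases hx' : x ∈ td.bag v
  · rw [stepF_eq hx', stepF_eq hx]
  · have hs := Finset.mem_sdiff.1 (stepF_sdiff hcomp h hx')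
    have hs2 := stepF_sdiff hcomp h.symm hs.2
    rw [sdiff_singleton hcomp h hx hx'] at hs2
    exact Finset.mem_singleton.1 hs2

lemma pushW_mem : ∀ {u v : Fin n} (W : td.T.Walk u v) {x : V},
    x ∈ td.bag u → td.pushW W x ∈ td.bag v := by
  intro u v W
  induction W with
  | nil => intro x hx; exact hx
  | cons h p ih =>
    intro x hx
    exact ih (stepF_mem hcomp h hx)

lemma pushW_eqv : ∀ {u v : Fin n} (W : td.T.Walk u v) {x : V},
    x ∈ td.bag u → Relation.EqvGen td.Parent x (td.pushW W x) := by
  intro u v W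
  induction W with
  | nil => intro x _; exact Relation.EqvGen.refl x
  | @cons a b c h p ih =>
    intro x hx
    by_cases hx' : x ∈ td.bag b
    · show Relation.EqvGen td.Parent x (td.pushW p (td.stepF a b x))
      rw [stepF_eq hx']; exact ih hx'
    · exact Relation.EqvGen.trans _ _ _
        (Relation.EqvGen.rel _ _ (parent_stepF hcomp h hx hx'))
        (ih (stepF_mem hcomp h hx))

lemma pushW_inj : ∀ {u v : Fin n} (W : td.T.Walk u v) {x y : V},
    x ∈ td.bag u → y ∈ td.bag u → td.pushW W x = td.pushW W y → x = y := by
  intro u v W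
  induction W with
  | nil => intro x y _ _ hxy; exact hxy
  | cons h p ih =>
    intro x y hx hy hxy
    have := ih (stepF_mem hcomp h hx) (stepF_mem hcomp h hy) hxy
    rw [← stepF_stepF hcomp h hx, this, stepF_stepF hcomp h hy]

noncomputable def pathTo (td : TreeDecomp G (Fin n)) (u v : Fin n) : td.T.Walk u v :=
  (td.isTree.existsUnique_path u v).choose

omit hcomp in
lemma pathTo_isPath (u v : Fin n) : (pathTo td u v).IsPath :=
  (td.isTree.existsUnique_path u v).choose_spec.1

omit hcomp in
lemma pathTo_unique {u v : Fin n} (p : td.T.Walk u v) (hp : p.IsPath) : p = pathTo td u v :=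
  (td.isTree.existsUnique_path u v).choose_spec.2 p hp

omit hcomp in
lemma path_cons {u v : Fin n} (h : td.T.Adj u v) (r : Fin n) :
    pathTo td u r = Walk.cons h (pathTo td v r) ∨
    pathTo td v r = Walk.cons h.symm (pathTo td u r) := by
  by_cases hu : u ∈ (pathTo td v r).support
  · right
    have ht : ((pathTo td v r).takeUntil u hu).IsPath := (pathTo_isPath v r).takeUntil hu
    have hcons : (Walk.cons h.symm Walk.nil : td.T.Walk v u).IsPath := by
      simp [Walk.cons_isPath_iff, h.ne']
    have e1 : (pathTo td v r).takeUntil u hu = Walk.cons h.symm Walk.nil :=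
      (pathTo_unique _ ht).trans (pathTo_unique _ hcons).symm
    have e2 : (pathTo td v r).dropUntil u hu = pathTo td u r :=
      pathTo_unique _ ((pathTo_isPath v r).dropUntil hu)
    conv_lhs => rw [← (pathTo td v r).take_spec hu, e1, e2]
    simp [Walk.cons_append]
  · left
    exact (pathTo_unique _ ((Walk.cons_isPath_iff h _).2 ⟨pathTo_isPath v r, hu⟩)).symm

noncomputable def phiAt (td : TreeDecomp G (Fin n)) (r u : Fin n) (x : V) : V :=
  td.pushW (pathTo td u r) x

noncomputable def phi (td : TreeDecomp G (Fin n)) (r : Fin n) (x : V) : V :=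
  phiAt td r (td.mem_bag x).choose x

omit hcomp in
lemma phiAt_adj {r u v : Fin n} (h : td.T.Adj u v) {x : V} (hxu : x ∈ td.bag u)
    (hxv : x ∈ td.bag v) : phiAt td r u x = phiAt td r v x := by
  rcases path_cons h r with e | e
  · rw [phiAt, e]
    show td.pushW (pathTo td v r) (td.stepF u v x) = _
    rw [stepF_eq hxv]; rfl
  · rw [phiAt, phiAt, e]
    show _ = td.pushW (pathTo td u r) (td.stepF v u x)
    rw [stepF_eq hxu]

lemma phiAt_eq_phi {r u : Fin n} {x : V} (hx : x ∈ td.bag u) :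
    phiAt td r u x = phi td r x := by
  have key : ∀ (a b : {w | x ∈ td.bag w}) (_ : (td.T.induce {w | x ∈ td.bag w}).Walk a b),
      phiAt td r a x = phiAt td r b x := by
    intro a b W
    induction W with
    | nil => rfl
    | @cons a b c h' p ih =>
      exact (phiAt_adj h' a.2 b.2).trans ih
  obtain ⟨W⟩ := (td.support_connected x).preconnected ⟨u, hx⟩ ⟨(td.mem_bag x).choose,
    (td.mem_bag x).choose_spec⟩
  exact key _ _ W


lemma phi_mem (r : Fin n) (x : V) : phi td r x ∈ td.bag r :=
  pushW_mem hcomp _ (td.mem_bag x).choose_spec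

lemma phi_eqv (r : Fin n) (x : V) : Relation.EqvGen td.Parent x (phi td r x) :=
  pushW_eqv hcomp _ (td.mem_bag x).choose_spec

lemma phi_inj {r u : Fin n} {x y : V} (hx : x ∈ td.bag u) (hy : y ∈ td.bag u)
    (hxy : phi td r x = phi td r y) : x = y := by
  rw [← phiAt_eq_phi hcomp hx, ← phiAt_eq_phi hcomp hy] at hxy
  exact pushW_inj hcomp _ hx hy hxy

lemma phi_parent {r : Fin n} {x y : V} (hp : td.Parent x y) : phi td r x = phi td r y := by
  obtain ⟨u, v, h, e1, e2⟩ := hp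
  have hx : x ∈ td.bag u \ td.bag v := e1 ▸ Finset.mem_singleton_self x
  have hy : y ∈ td.bag v \ td.bag u := e2 ▸ Finset.mem_singleton_self y
  rw [Finset.mem_sdiff] at hx hy
  have hyx : td.stepF u v x = y := by
    have := stepF_sdiff hcomp h hx.2 (x := x)
    rw [e2] at this
    exact Finset.mem_singleton.1 this
  rw [← phiAt_eq_phi hcomp hx.1, ← phiAt_eq_phi hcomp hy.1]
  rcases path_cons h r with e | e
  · rw [phiAt, e]
    show td.pushW (pathTo td v r) (td.stepF u v x) = _
    rw [hyx]; rfl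
  · rw [phiAt, phiAt, e]
    show _ = td.pushW (pathTo td u r) (td.stepF v u y)
    rw [← hyx, stepF_stepF hcomp h hx.1]

lemma eqv_iff_phi (r : Fin n) (x y : V) :
    Relation.EqvGen td.Parent x y ↔ phi td r x = phi td r y := by
  constructor
  · intro h
    induction h with
    | rel a b hab => exact phi_parent hcomp hab
    | refl a => rfl
    | symm a b _ ih => exact ih.symm
    | trans a b c _ _ ih1 ih2 => exact ih1.trans ih2
  · intro h
    exact Relation.EqvGen.trans _ _ _ (phi_eqv hcomp r x)
      (h ▸ Relation.EqvGen.symm _ _ (phi_eqv hcomp r y))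

lemma exists_phi_eq {r : Fin n} {z : V} (hz : z ∈ td.bag r) (u : Fin n) :
    ∃ x ∈ td.bag u, phi td r x = z := by
  obtain ⟨a, ha, hza⟩ := Finset.surj_on_of_inj_on_of_card_le
    (f := fun a (_ : a ∈ td.bag u) => phi td r a)
    (fun a _ => phi_mem hcomp r a)
    (fun a b ha hb hab => phi_inj hcomp ha hb hab)
    (by rw [hcomp.1 r, hcomp.1 u]) z hz
  exact ⟨a, ha, hza.symm⟩

end Fam

/-- The family partition of an `ℓ`-complete tree decomposition
exists and is unique: there are exactly `ℓ + 1` families (the equivalence classes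
of the transitive closure of the parent relation), each family meets every bag in
exactly one vertex, and each family is an independent set. -/
theorem family_partition (n ℓ : ℕ) (V : Type) [DecidableEq V] (G : SimpleGraph V)
    (td : TreeDecomp G (Fin n)) (hcomp : td.IsComplete ℓ) :
    ∃ F : Fin (ℓ + 1) → Set V,
      (∀ x : V, ∃! i, x ∈ F i) ∧
      (∀ x y : V, Relation.EqvGen td.Parent x y ↔ ∃ i, x ∈ F i ∧ y ∈ F i) ∧
      (∀ i u, ∃! x, x ∈ F i ∧ x ∈ td.bag u) ∧
      (∀ i, ∀ x ∈ F i, ∀ y ∈ F i, ¬G.Adj x y) := by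
  have hne : Nonempty (Fin n) := td.isTree.isConnected.nonempty
  obtain ⟨r⟩ := hne
  let e : (td.bag r : Finset V) ≃ Fin (ℓ + 1) := Finset.equivFinOfCardEq (hcomp.1 r)
  refine ⟨fun i => {x | phi td r x = (e.symm i : V)}, ?_, ?_, ?_, ?_⟩
  · intro x
    refine ⟨e ⟨phi td r x, phi_mem hcomp r x⟩, ?_, ?_⟩
    · show phi td r x = _
      rw [Equiv.symm_apply_apply]
    · intro j hj
      have : e.symm j = ⟨phi td r x, phi_mem hcomp r x⟩ := Subtype.ext (hj : _ = _).symm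
      rw [← this, Equiv.apply_symm_apply]
  · intro x y
    constructor
    · intro h
      have hxy := (eqv_iff_phi hcomp r x y).1 h
      refine ⟨e ⟨phi td r x, phi_mem hcomp r x⟩, ?_, ?_⟩
      · show phi td r x = _; rw [Equiv.symm_apply_apply]
      · show phi td r y = _; rw [Equiv.symm_apply_apply]; exact hxy.symm
    · rintro ⟨i, h1, h2⟩
      exact (eqv_iff_phi hcomp r x y).2 ((h1 : phi td r x = _).trans (h2 : phi td r y = _).symm)
  · intro i u
    obtain ⟨a, ha, hza⟩ := exists_phi_eq hcomp (e.symm i).2 u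
    refine ⟨a, ⟨hza, ha⟩, ?_⟩
    rintro b ⟨hb1, hb2⟩
    exact phi_inj hcomp hb2 ha ((hb1 : phi td r b = _).trans hza.symm)
  · intro i x hx y hy hadj
    obtain ⟨u, hxu, hyu⟩ := td.edge_bag hadj
    exact hadj.ne (phi_inj hcomp hxu hyu ((hx : _ = _).trans (hy : _ = _).symm))
end
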